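/- arXiv:1712.00500 — 2 statements merged into one kernel-verified Lean document; each statement's English description precedes it below -/
import Mathlib

section
/- Let M be a finitely generated ℤ^d-graded S_A-module and let F ⪯ G ⪯ A be faces. Then a subset Z ⊆ qdeg M[∂^{−G}] is an irreducible component of qdeg M[∂^{−G}] if and only if Z is an irreducible component of qdeg M[∂^{−F}]. In particular, qdeg M[∂^{−G}] ⊆ qdeg M[∂^{−F}]. -/
/-!
Common setup: `A` is a `d × n` integer matrix, given by its columns `a : Fin n → Lat d`,
with `ℤA = ℤ^d` (`SpansZ`) and `ℕA` pointed (`Pointed`).  Faces, semigroups, graded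
modules, quasidegree sets, the dualizing complex `ω•_{S_A}` and the Ishida complexes
`℧•_F` are formalized below; all cohomology statements are expressed via the
(ℤ^d-)graded components of these complexes.
-/

namespace GKZ

open scoped Classical

noncomputable section

abbrev Lat (d : ℕ) := Fin d → ℤ
abbrev CS (d : ℕ) := Fin d → ℂ
abbrev Laur (d : ℕ) := AddMonoidAlgebra ℂ (Lat d)

/-- Inclusion ℤ^d ⊆ ℂ^d. -/
def toC {d : ℕ} (α : Lat d) : CS d := fun i => (α i : ℂ)
/-- Inclusion ℤ^d ⊆ ℝ^d. -/
def toR {d : ℕ} (α : Lat d) : Fin d → ℝ := fun i => (α i : ℝ)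
/-- The monomial t^α in the Laurent polynomial ring ℂ[ℤ^d]. -/
def mono {d : ℕ} (α : Lat d) : Laur d := AddMonoidAlgebra.single α 1

variable {d n : ℕ}

/-- The affine semigroup ℕA generated by the columns of `A`. -/
def NA (a : Fin n → Lat d) : AddSubmonoid (Lat d) := AddSubmonoid.closure (Set.range a)

/-- ℕA is pointed: ℕA ∩ (−ℕA) = {0}. -/
def Pointed (a : Fin n → Lat d) : Prop := ∀ x ∈ NA a, -x ∈ NA a → x = 0

/-- ℤA = ℤ^d. -/
def SpansZ (a : Fin n → Lat d) : Prop :=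
  AddSubgroup.closure (Set.range a) = (⊤ : AddSubgroup (Lat d))

/-- The real cone ℝ₊F spanned by the columns indexed by `F`. -/
def cone (a : Fin n → Lat d) (F : Set (Fin n)) : Set (Fin d → ℝ) :=
  { x | ∃ c : Fin n → ℝ, (∀ i, 0 ≤ c i) ∧ (∀ i, i ∉ F → c i = 0) ∧ x = ∑ i, c i • toR (a i) }

/-- `F` is a face of `A`: ℝ₊F is a face of the cone ℝ₊A, and `F` consists of all the
columns of `A` lying on that face. -/
def IsFace (a : Fin n → Lat d) (F : Set (Fin n)) : Prop :=
  (∀ x y, x ∈ cone a Set.univ → y ∈ cone a Set.univ →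
      x + y ∈ cone a F → x ∈ cone a F ∧ y ∈ cone a F) ∧
  (∀ i, toR (a i) ∈ cone a F → i ∈ F)

/-- ℕF. -/
def NFace (a : Fin n → Lat d) (F : Set (Fin n)) : AddSubmonoid (Lat d) :=
  AddSubmonoid.closure (a '' F)

/-- ℤF. -/
def ZFace (a : Fin n → Lat d) (F : Set (Fin n)) : AddSubgroup (Lat d) :=
  AddSubgroup.closure (a '' F)

/-- ℂF ⊆ ℂ^d. -/
def CFace (a : Fin n → Lat d) (F : Set (Fin n)) : Submodule ℂ (CS d) :=
  Submodule.span ℂ (toC '' (a '' F))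

/-- d_F, the rank of ℤF. -/
def dimF (a : Fin n → Lat d) (F : Set (Fin n)) : ℕ :=
  Module.finrank ℤ (Submodule.span ℤ (a '' F))

/-- σ_F, the sum of the columns of F. -/
def sigmaF (a : Fin n → Lat d) (F : Set (Fin n)) : Lat d :=
  ∑ i : Fin n, if i ∈ F then a i else 0

/-- ε_A = a_1 + ⋯ + a_n. -/
def epsA (a : Fin n → Lat d) : Lat d := ∑ i : Fin n, a i

/-- ℕA − ℕF ⊆ ℤ^d. -/
def NAmNF (a : Fin n → Lat d) (F : Set (Fin n)) : Set (Lat d) :=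
  {γ | ∃ u ∈ NA a, ∃ v ∈ NFace a F, γ = u - v}

/-- ℕF − ℕA ⊆ ℤ^d. -/
def NFmNA (a : Fin n → Lat d) (F : Set (Fin n)) : Set (Lat d) :=
  {γ | ∃ u ∈ NFace a F, ∃ v ∈ NA a, γ = u - v}

/-- ℕF − ℕH ⊆ ℤ^d. -/
def NFmNH (a : Fin n → Lat d) (F H : Set (Fin n)) : Set (Lat d) :=
  {γ | ∃ u ∈ NFace a F, ∃ v ∈ NFace a H, γ = u - v}

/-- ℕA is normal: ℕA = ℤ^d ∩ ℝ₊A. -/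
def Normal (a : Fin n → Lat d) : Prop :=
  ∀ γ : Lat d, γ ∈ NA a ↔ toR γ ∈ cone a Set.univ

/-- The Zariski closure of a subset of ℂ^d. -/
def zClosure {d : ℕ} (T : Set (CS d)) : Set (CS d) :=
  {x | ∀ p : MvPolynomial (Fin d) ℂ, (∀ y ∈ T, MvPolynomial.eval y p = 0) →
    MvPolynomial.eval x p = 0}

def IsZClosed {d : ℕ} (Z : Set (CS d)) : Prop := zClosure Z ⊆ Z

/-- Irreducibility of a subset of ℂ^d in the Zariski topology. -/
def ZIrred {d : ℕ} (Z : Set (CS d)) : Prop :=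
  Z.Nonempty ∧ ∀ C₁ C₂ : Set (CS d), IsZClosed C₁ → IsZClosed C₂ →
    Z ⊆ C₁ ∪ C₂ → Z ⊆ C₁ ∨ Z ⊆ C₂

/-- Krull (topological) dimension of a subset of ℂ^d with the Zariski topology:
the Krull dimension of the poset of irreducible Zariski-closed subsets contained in it. -/
def zdim {d : ℕ} (Z : Set (CS d)) : WithBot ℕ∞ :=
  Order.krullDim {C : Set (CS d) // C ⊆ Z ∧ IsZClosed C ∧ ZIrred C}

/-- `Z` is an irreducible component of `W`: a maximal irreducible Zariski-closed subset. -/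
def IsIrredComp {d : ℕ} (Z W : Set (CS d)) : Prop :=
  Z ⊆ W ∧ IsZClosed Z ∧ ZIrred Z ∧
    ∀ Z' : Set (CS d), IsZClosed Z' → ZIrred Z' → Z ⊆ Z' → Z' ⊆ W → Z' = Z

/-- The type of faces of `A`. -/
def FaceT (a : Fin n → Lat d) := {G : Set (Fin n) // IsFace a G}

instance (a : Fin n → Lat d) : Finite (FaceT a) := by
  unfold FaceT; infer_instance

noncomputable instance (a : Fin n → Lat d) : Fintype (FaceT a) := Fintype.ofFinite _

/-- Degree set of the localization M[∂^{−G}] of the monomial module with degree set `E`: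
the set E − ℕG. -/
def locE (a : Fin n → Lat d) (E : Set (Lat d)) (G : Set (Fin n)) : Set (Lat d) :=
  {γ | ∃ f ∈ NFace a G, γ + f ∈ E}

/-- Functions supported on a subset, as a ℂ-submodule of the function space. -/
def funSupported {ι : Type*} (S : Set ι) : Submodule ℂ (ι → ℂ) where
  carrier := {c | ∀ i, i ∉ S → c i = 0}
  add_mem' := by
    intro x y hx hy i hi
    simp only [Set.mem_setOf_eq] at hx hy
    simp [Pi.add_apply, hx i hi, hy i hi]
  zero_mem' := by intro i _; rfl
  smul_mem' := by
    intro r x hx i hi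
    simp only [Set.mem_setOf_eq] at hx
    simp [Pi.smul_apply, hx i hi]

/-- The degree-γ part of the term of the Ishida complex ℧•_F(M) (base face `F`, monomial
module with degree set `E`) whose summands are indexed by the faces of absolute dimension
`j` (cohomological degree `j − d_F`): functions on the faces `G ⊇ F` with `d_G = j` and
`γ ∈ E − ℕG`. -/
def ishChain (a : Fin n → Lat d) (E : Set (Lat d)) (F : Set (Fin n)) (j : ℤ) (γ : Lat d) :
    Submodule ℂ (FaceT a → ℂ) :=
  funSupported {G : FaceT a | F ⊆ G.1 ∧ (dimF a G.1 : ℤ) = j ∧ γ ∈ locE a E G.1}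

/-- The differential of the Ishida complex (in each ℤ^d-degree): the component from a face
`G'` into a face `G''` covering it is `ε G' G''` times the natural localization map. -/
def ishDelta (a : Fin n → Lat d) (ε : Set (Fin n) → Set (Fin n) → ℂ) :
    (FaceT a → ℂ) →ₗ[ℂ] (FaceT a → ℂ) where
  toFun c := fun G'' => ∑ G' : FaceT a,
    if G'.1 ⊆ G''.1 ∧ dimF a G''.1 = dimF a G'.1 + 1 then ε G'.1 G''.1 * c G' else 0
  map_add' x y := by
    funext G''
    simp only [Pi.add_apply, ← Finset.sum_add_distrib]
    refine Finset.sum_congr rfl fun G' _ => ?_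
    by_cases h : G'.1 ⊆ G''.1 ∧ dimF a G''.1 = dimF a G'.1 + 1
    · simp [h, mul_add]
    · simp [h]
  map_smul' r x := by
    funext G''
    simp only [Pi.smul_apply, smul_eq_mul, RingHom.id_apply, Finset.mul_sum]
    refine Finset.sum_congr rfl fun G' _ => ?_
    by_cases h : G'.1 ⊆ G''.1 ∧ dimF a G''.1 = dimF a G'.1 + 1
    · simp only [h, and_self, if_true]; ring
    · simp [h]

/-- Degree-γ cocycles of the Ishida complex at absolute dimension `j`. -/
def ishZ (a : Fin n → Lat d) (E : Set (Lat d)) (ε : Set (Fin n) → Set (Fin n) → ℂ)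
    (F : Set (Fin n)) (j : ℤ) (γ : Lat d) : Submodule ℂ (FaceT a → ℂ) :=
  ishChain a E F j γ ⊓ LinearMap.ker (ishDelta a ε)

/-- Degree-γ coboundaries of the Ishida complex at absolute dimension `j`. -/
def ishB (a : Fin n → Lat d) (E : Set (Lat d)) (ε : Set (Fin n) → Set (Fin n) → ℂ)
    (F : Set (Fin n)) (j : ℤ) (γ : Lat d) : Submodule ℂ (FaceT a → ℂ) :=
  Submodule.map (ishDelta a ε) (ishChain a E F (j - 1) γ)

/-- The degree-γ component of the cohomology of the Ishida complex ℧•_F(M) at absolute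
dimension `j` (cohomological degree `j − d_F`). -/
abbrev ishH (a : Fin n → Lat d) (E : Set (Lat d)) (ε : Set (Fin n) → Set (Fin n) → ℂ)
    (F : Set (Fin n)) (j : ℤ) (γ : Lat d) :=
  ↥(ishZ a E ε F j γ) ⧸
    Submodule.comap (ishZ a E ε F j γ).subtype (ishB a E ε F j γ)

/-- Nonvanishing of the degree-γ component of the cohomology of the Ishida complex. -/
def ishHne (a : Fin n → Lat d) (E : Set (Lat d)) (ε : Set (Fin n) → Set (Fin n) → ℂ)
    (F : Set (Fin n)) (j : ℤ) (γ : Lat d) : Prop :=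
  ¬ (ishZ a E ε F j γ ≤ ishB a E ε F j γ)

/-- Degree-γ part of the term of ω•_{S_A} in cohomological degree `i`:
functions on the faces `G` with `d_{A/G} = i` and `γ ∈ ℕG − ℕA`. -/
def omChain (a : Fin n → Lat d) (i : ℤ) (γ : Lat d) : Submodule ℂ (FaceT a → ℂ) :=
  funSupported {G : FaceT a | (dimF a G.1 : ℤ) = (d : ℤ) - i ∧ γ ∈ NFmNA a G.1}

/-- Degree-γ part of the differential of ω•_{S_A}: the component from a face `G'` to a face
`G''` covered by it is `ε G' G''` times the natural projection ℂ{ℕG'−ℕA} → ℂ{ℕG''−ℕA}. -/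
def omDelta (a : Fin n → Lat d) (ε : Set (Fin n) → Set (Fin n) → ℂ) (γ : Lat d) :
    (FaceT a → ℂ) →ₗ[ℂ] (FaceT a → ℂ) where
  toFun c := fun G'' =>
    if γ ∈ NFmNA a G''.1 then
      ∑ G' : FaceT a,
        if G''.1 ⊆ G'.1 ∧ dimF a G'.1 = dimF a G''.1 + 1 then ε G'.1 G''.1 * c G' else 0
    else 0
  map_add' x y := by
    funext G''
    by_cases hγ : γ ∈ NFmNA a G''.1
    · simp only [Pi.add_apply, hγ, if_true, ← Finset.sum_add_distrib]
      refine Finset.sum_congr rfl fun G' _ => ?_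
      by_cases h : G''.1 ⊆ G'.1 ∧ dimF a G'.1 = dimF a G''.1 + 1
      · simp [h, mul_add]
      · simp [h]
    · simp [hγ]
  map_smul' r x := by
    funext G''
    by_cases hγ : γ ∈ NFmNA a G''.1
    · simp only [Pi.smul_apply, smul_eq_mul, RingHom.id_apply, hγ, if_true, Finset.mul_sum]
      refine Finset.sum_congr rfl fun G' _ => ?_
      by_cases h : G''.1 ⊆ G'.1 ∧ dimF a G'.1 = dimF a G''.1 + 1
      · simp only [h, and_self, if_true]; ring
      · simp [h]
    · simp [hγ]

/-- Degree-γ cocycles of ω•_{S_A} in cohomological degree `i`. -/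
def omZ (a : Fin n → Lat d) (ε : Set (Fin n) → Set (Fin n) → ℂ) (i : ℤ) (γ : Lat d) :
    Submodule ℂ (FaceT a → ℂ) :=
  omChain a i γ ⊓ LinearMap.ker (omDelta a ε γ)

/-- Degree-γ coboundaries of ω•_{S_A} in cohomological degree `i`. -/
def omB (a : Fin n → Lat d) (ε : Set (Fin n) → Set (Fin n) → ℂ) (i : ℤ) (γ : Lat d) :
    Submodule ℂ (FaceT a → ℂ) :=
  Submodule.map (omDelta a ε γ) (omChain a (i - 1) γ)

/-- Nonvanishing of H^i(ω•_{S_A})_γ. -/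
def omHne (a : Fin n → Lat d) (ε : Set (Fin n) → Set (Fin n) → ℂ) (i : ℤ) (γ : Lat d) : Prop :=
  ¬ (omZ a ε i γ ≤ omB a ε i γ)

/-- A ℤ^d-graded S_A-module, presented by its grading together with the (degree-shifting)
action of the monomials t^u, u ∈ ℕA. -/
structure GradedSAMod (a : Fin n → Lat d) (M : Type) [AddCommGroup M] [Module ℂ M] where
  decomp : Lat d → Submodule ℂ M
  internal : DirectSum.IsInternal decomp
  act : (u : Lat d) → u ∈ NA a → (M →ₗ[ℂ] M)
  act_zero : ∀ h0 : (0 : Lat d) ∈ NA a, act 0 h0 = LinearMap.id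
  act_add : ∀ (u : Lat d) (hu : u ∈ NA a) (v : Lat d) (hv : v ∈ NA a) (huv : u + v ∈ NA a),
    act (u + v) huv = (act u hu).comp (act v hv)
  act_grade : ∀ (u : Lat d) (hu : u ∈ NA a) (γ : Lat d), ∀ m ∈ decomp γ,
    act u hu m ∈ decomp (γ + u)

/-- Finite generation over S_A. -/
def GradedSAMod.FGmod {a : Fin n → Lat d} {M : Type} [AddCommGroup M] [Module ℂ M]
    (g : GradedSAMod a M) : Prop :=
  ∃ S : Finset M, ∀ m : M,
    m ∈ Submodule.span ℂ {x | ∃ u, ∃ hu : u ∈ NA a, ∃ s ∈ S, x = g.act u hu s}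

/-- Degrees of nonzero homogeneous elements of `M` that survive in the localization
`M[∂^{−H}]` (i.e. are killed by no power of t^{σ_H}). -/
def GradedSAMod.survTdeg {a : Fin n → Lat d} {M : Type} [AddCommGroup M] [Module ℂ M]
    (g : GradedSAMod a M) (H : Set (Fin n)) : Set (Lat d) :=
  {γ | ∃ m ∈ g.decomp γ, m ≠ 0 ∧ ∀ (k : ℕ) (hk : k • sigmaF a H ∈ NA a), g.act _ hk m ≠ 0}

/-- The quasidegree set of the localization `M[∂^{−H}]` of a finitely generated graded
module `M`: the union over `k` of the Zariski closures of the true degree sets of the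
finitely generated graded submodules t^{−kσ_H}·M of the localization. -/
def GradedSAMod.qdegLoc {a : Fin n → Lat d} {M : Type} [AddCommGroup M] [Module ℂ M]
    (g : GradedSAMod a M) (H : Set (Fin n)) : Set (CS d) :=
  ⋃ k : ℕ, zClosure (toC '' {γ : Lat d | γ + k • sigmaF a H ∈ g.survTdeg H})

/-- A ℂ-submodule is graded: it is spanned by its homogeneous elements. -/
def IsGradedSubC {d : ℕ} {M : Type} [AddCommGroup M] [Module ℂ M]
    (decomp : Lat d → Submodule ℂ M) (N : Submodule ℂ M) : Prop :=
  N = Submodule.span ℂ ((N : Set M) ∩ ⋃ γ : Lat d, (decomp γ : Set M))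

/-- A ℂ-submodule is an S_A-submodule: stable under the monomial action. -/
def IsStableSub {a : Fin n → Lat d} {M : Type} [AddCommGroup M] [Module ℂ M]
    (g : GradedSAMod a M) (N : Submodule ℂ M) : Prop :=
  ∀ (u : Lat d) (hu : u ∈ NA a), ∀ m ∈ N, g.act u hu m ∈ N

/-- The semigroup ring S_A = ℂ[ℕA] as a subalgebra of ℂ[ℤ^d]. -/
def SAlg (a : Fin n → Lat d) : Subalgebra ℂ (Laur d) :=
  Algebra.adjoin ℂ {x | ∃ α ∈ NA a, x = mono α}

/-- The monomial t^u, u ∈ ℕA, as an element of S_A. -/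
def smono (a : Fin n → Lat d) (u : Lat d) (hu : u ∈ NA a) : ↥(SAlg a) :=
  ⟨mono u, Algebra.subset_adjoin ⟨u, hu, rfl⟩⟩

/-- The underlying ℂ-vector space of the monomial module ℂ{E}: finitely supported
functions on `E`. -/
abbrev wMod (d : ℕ) (E : Set (Lat d)) := ↥(Finsupp.supported ℂ ℂ E)

/-- The action of the monomial t^w on ℂ{E}: shift the degree by `w`, truncate back to `E`. -/
def wAct {d : ℕ} (E : Set (Lat d)) (w : Lat d) : wMod d E →ₗ[ℂ] wMod d E :=
  (Finsupp.restrictDom ℂ ℂ E).comp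
    ((Finsupp.lmapDomain ℂ ℂ (fun γ => γ + w)).comp (Finsupp.supported ℂ ℂ E).subtype)

/-- The elements annihilated by some power of the ideal generated by the t^{a_i}, i ∉ F. -/
def torsionAt (a : Fin n → Lat d) (F : Set (Fin n)) {ML : Type} [AddCommGroup ML]
    [Module ℂ ML] (TL : (u : Lat d) → u ∈ NA a → (ML →ₗ[ℂ] ML)) : Set ML :=
  {y | ∃ k : ℕ, ∀ f : Fin k → Fin n, (∀ j, f j ∉ F) →
    ∀ h : (∑ j, a (f j)) ∈ NA a, TL (∑ j, a (f j)) h y = 0}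

/-- The toric ideal I_A ⊆ R_A = ℂ[∂_1,…,∂_n]. -/
def toricIdeal (a : Fin n → Lat d) : Ideal (MvPolynomial (Fin n) ℂ) :=
  RingHom.ker (MvPolynomial.aeval (fun i => mono (a i)) : MvPolynomial (Fin n) ℂ →ₐ[ℂ] Laur d)

/-- The ideal I_F^A = I_A + ⟨∂_i : a_i ∉ F⟩ of R_A. -/
def IFA (a : Fin n → Lat d) (F : Set (Fin n)) : Ideal (MvPolynomial (Fin n) ℂ) :=
  toricIdeal a ⊔ Ideal.span {p | ∃ i, i ∉ F ∧ p = MvPolynomial.X i}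

/-- An R_A-submodule is graded: it is spanned by its homogeneous elements. -/
def IsGradedSubR {d n : ℕ} {M : Type} [AddCommGroup M] [Module ℂ M]
    [Module (MvPolynomial (Fin n) ℂ) M]
    (decomp : Lat d → Submodule ℂ M) (N : Submodule (MvPolynomial (Fin n) ℂ) M) : Prop :=
  N = Submodule.span (MvPolynomial (Fin n) ℂ) ((N : Set M) ∩ ⋃ γ : Lat d, (decomp γ : Set M))

/-- `h` is the primitive integral support function of the facet `G`. -/
def IsPISF (a : Fin n → Lat d) (G : Set (Fin n)) (h : Lat d →ₗ[ℤ] ℤ) : Prop :=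
  (∃ x, h x = 1) ∧ (∀ i, 0 ≤ h (a i)) ∧ (∀ i, h (a i) = 0 ↔ i ∈ G)

/-- The ℂ-linear extension of an integral linear form to ℂ^d. -/
def hC {d : ℕ} (h : Lat d →ₗ[ℤ] ℤ) (β : CS d) : ℂ :=
  ∑ j : Fin d, β j * ((h (Pi.single j 1) : ℤ) : ℂ)


lemma subset_zClosure (T : Set (CS d)) : T ⊆ zClosure T := fun x hx p hp => hp x hx

lemma zClosure_mono {T T' : Set (CS d)} (h : T ⊆ T') : zClosure T ⊆ zClosure T' :=
  fun x hx p hp => hx p (fun y hy => hp y (h hy))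

lemma zClosure_min {T C : Set (CS d)} (h : T ⊆ C) (hC : IsZClosed C) : zClosure T ⊆ C :=
  fun x hx => hC (fun p hp => hx p fun y hy => hp y (h hy))

lemma isZClosed_zClosure {T : Set (CS d)} : IsZClosed (zClosure T) :=
  fun x hx p hp => hx p (fun y hy => hy p hp)

lemma isZClosed_empty : IsZClosed (∅ : Set (CS d)) := by
  intro x hx
  have := hx 1 (by simp)
  simp at this

lemma not_mem_closed_witness {C : Set (CS d)} (hC : IsZClosed C) {x : CS d} (hx : x ∉ C) :
    ∃ p : MvPolynomial (Fin d) ℂ, (∀ y ∈ C, MvPolynomial.eval y p = 0) ∧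
      MvPolynomial.eval x p ≠ 0 := by
  by_contra h
  push_neg at h
  exact hx (hC (fun p hp => h p hp))

lemma isZClosed_union {C₁ C₂ : Set (CS d)} (h₁ : IsZClosed C₁) (h₂ : IsZClosed C₂) :
    IsZClosed (C₁ ∪ C₂) := by
  intro x hx
  by_contra hmem
  rw [Set.mem_union] at hmem
  push_neg at hmem
  obtain ⟨p₁, hp₁, hx₁⟩ := not_mem_closed_witness h₁ hmem.1
  obtain ⟨p₂, hp₂, hx₂⟩ := not_mem_closed_witness h₂ hmem.2
  have := hx (p₁ * p₂) (by
    rintro y (hy | hy)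
    · simp [hp₁ y hy]
    · simp [hp₂ y hy])
  rw [map_mul] at this
  rcases mul_eq_zero.mp this with h | h
  · exact hx₁ h
  · exact hx₂ h

lemma isZClosed_biUnion {ι : Type*} (s : Finset ι) (C : ι → Set (CS d))
    (h : ∀ i ∈ s, IsZClosed (C i)) : IsZClosed (⋃ i ∈ s, C i) := by
  classical
  induction s using Finset.induction_on with
  | empty => simpa using isZClosed_empty
  | @insert a s ha ih =>
    rw [Finset.set_biUnion_insert]
    exact isZClosed_union (h a (Finset.mem_insert_self a s))
      (ih fun i hi => h i (Finset.mem_insert_of_mem hi))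

/-- restriction of a polynomial to a line -/
def linePoly (p : MvPolynomial (Fin d) ℂ) (x v : CS d) : Polynomial ℂ :=
  MvPolynomial.eval₂ Polynomial.C
    (fun i => Polynomial.C (x i) + Polynomial.C (v i) * Polynomial.X) p

lemma linePoly_eval (p : MvPolynomial (Fin d) ℂ) (x v : CS d) (z : ℂ) :
    (linePoly p x v).eval z = MvPolynomial.eval (x + z • v) p := by
  unfold linePoly
  have := MvPolynomial.eval₂_comp_left (Polynomial.evalRingHom z) Polynomial.C
    (fun i => Polynomial.C (x i) + Polynomial.C (v i) * Polynomial.X) p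
  simp only [Polynomial.coe_evalRingHom] at this
  rw [this]
  have h2 : (Polynomial.evalRingHom z).comp Polynomial.C = RingHom.id ℂ := by
    ext r; simp
  have h3 : (Polynomial.eval z ∘
      fun i => Polynomial.C (x i) + Polynomial.C (v i) * Polynomial.X) = fun i => (x + z • v) i := by
    funext i
    simp [Pi.add_apply, Pi.smul_apply, smul_eq_mul]
    ring
  rw [h2, h3, MvPolynomial.eval₂_id]

lemma vanish_on_line {p : MvPolynomial (Fin d) ℂ} {x v : CS d} {S : Set ℂ} (hS : S.Infinite)
    (h : ∀ z ∈ S, MvPolynomial.eval (x + z • v) p = 0) (z : ℂ) :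
    MvPolynomial.eval (x + z • v) p = 0 := by
  rw [← linePoly_eval]
  have hz : linePoly p x v = 0 := by
    apply Polynomial.eq_zero_of_infinite_isRoot
    apply hS.mono
    intro w hw
    simp only [Set.mem_setOf_eq, Polynomial.IsRoot, linePoly_eval]
    exact h w hw
  simp [hz]

/-- translation of a polynomial -/
def shiftPoly (p : MvPolynomial (Fin d) ℂ) (v : CS d) : MvPolynomial (Fin d) ℂ :=
  MvPolynomial.eval₂ MvPolynomial.C (fun i => MvPolynomial.X i + MvPolynomial.C (v i)) p

lemma shiftPoly_eval (p : MvPolynomial (Fin d) ℂ) (v y : CS d) :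
    MvPolynomial.eval y (shiftPoly p v) = MvPolynomial.eval (y + v) p := by
  unfold shiftPoly
  have := MvPolynomial.eval₂_comp_left (MvPolynomial.eval y) MvPolynomial.C
    (fun i => MvPolynomial.X i + MvPolynomial.C (v i)) p
  rw [this]
  have h2 : ((MvPolynomial.eval y : MvPolynomial (Fin d) ℂ →+* ℂ)).comp MvPolynomial.C
      = RingHom.id ℂ := by
    ext r; simp
  have h3 : (⇑(MvPolynomial.eval y : MvPolynomial (Fin d) ℂ →+* ℂ) ∘
      fun i => MvPolynomial.X i + MvPolynomial.C (v i)) = fun i => (y + v) i := by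
    funext i; simp
  rw [h2, h3, MvPolynomial.eval₂_id]

lemma mem_zClosure_translate {T : Set (CS d)} {x : CS d} (hx : x ∈ zClosure T) (v : CS d) :
    x + v ∈ zClosure ((· + v) '' T) := by
  intro p hp
  have h1 : ∀ y ∈ T, MvPolynomial.eval y (shiftPoly p v) = 0 := by
    intro y hy
    rw [shiftPoly_eval]
    exact hp _ ⟨y, hy, rfl⟩
  have := hx _ h1
  rwa [shiftPoly_eval] at this

lemma IsZClosed.translate {Z : Set (CS d)} (hZ : IsZClosed Z) (v : CS d) :
    IsZClosed ((· + v) '' Z) := by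
  intro x hx
  have h1 : x + (-v) ∈ zClosure ((· + (-v)) '' ((· + v) '' Z)) := mem_zClosure_translate hx (-v)
  have h2 : ((· + (-v)) '' ((· + v) '' Z)) = Z := by
    rw [Set.image_image]
    simp
  rw [h2] at h1
  exact ⟨x + (-v), hZ h1, neg_add_cancel_right x v⟩

lemma ZIrred.translate {Z : Set (CS d)} (hZ : ZIrred Z) (v : CS d) :
    ZIrred ((· + v) '' Z) := by
  refine ⟨hZ.1.image _, ?_⟩
  intro C₁ C₂ h₁ h₂ hsub
  have key : ∀ (C : Set (CS d)), IsZClosed C → IsZClosed ((· + (-v)) '' C) :=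
    fun C hC => hC.translate (-v)
  have hsub' : Z ⊆ ((· + (-v)) '' C₁) ∪ ((· + (-v)) '' C₂) := by
    intro y hy
    rcases hsub ⟨y, hy, rfl⟩ with h | h
    · exact Or.inl ⟨y + v, h, add_neg_cancel_right y v⟩
    · exact Or.inr ⟨y + v, h, add_neg_cancel_right y v⟩
  have himg : ∀ (C : Set (CS d)), Z ⊆ ((· + (-v)) '' C) → (· + v) '' Z ⊆ C := by
    rintro C hC - ⟨y, hy, rfl⟩
    obtain ⟨u, hu, hu2⟩ := hC hy
    have : u = y + v := by rw [← hu2]; exact (neg_add_cancel_right u v).symm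
    show y + v ∈ C
    rw [← this]; exact hu
  rcases hZ.2 _ _ (key _ h₁) (key _ h₂) hsub' with h | h
  · exact Or.inl (himg _ h)
  · exact Or.inr (himg _ h)

lemma toC_add_nsmul (γ σ : Lat d) (m : ℕ) : toC (γ + m • σ) = toC γ + (m : ℂ) • toC σ := by
  funext j
  simp only [toC, Pi.add_apply, Pi.smul_apply, smul_eq_mul, nsmul_eq_mul, Pi.mul_apply,
    Pi.natCast_apply]
  push_cast
  ring

lemma zClosure_line_stable {E : Set (Lat d)} {σ : Lat d} (hE : ∀ γ ∈ E, γ + σ ∈ E)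
    {x : CS d} (hx : x ∈ zClosure (toC '' E)) (z : ℂ) :
    x + z • toC σ ∈ zClosure (toC '' E) := by
  have hiter : ∀ (γ : Lat d), γ ∈ E → ∀ m : ℕ, γ + m • σ ∈ E := by
    intro γ hγ m
    induction m with
    | zero => simpa using hγ
    | succ k ih =>
      have : γ + (k + 1) • σ = (γ + k • σ) + σ := by
        rw [succ_nsmul]; abel
      rw [this]
      exact hE _ ih
  intro p hp
  have hvan : ∀ y ∈ toC '' E, MvPolynomial.eval y (shiftPoly p (z • toC σ)) = 0 := by
    rintro - ⟨γ, hγ, rfl⟩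
    rw [shiftPoly_eval]
    refine vanish_on_line (Set.infinite_range_of_injective (f := (Nat.cast : ℕ → ℂ))
      Nat.cast_injective) ?_ z
    rintro - ⟨m, rfl⟩
    rw [← toC_add_nsmul]
    exact hp _ ⟨_, hiter γ hγ m, rfl⟩
  have := hx _ hvan
  rwa [shiftPoly_eval] at this

lemma comp_line_invariant {W Z : Set (CS d)} {c : CS d}
    (hWc : IsZClosed W) (hWinv : ∀ x ∈ W, ∀ z : ℂ, x + z • c ∈ W)
    (hZ : IsIrredComp Z W) : ∀ x ∈ Z, ∀ z : ℂ, x + z • c ∈ Z := by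
  obtain ⟨hZW, hZcl, hZirr, hZmax⟩ := hZ
  set U : Set (CS d) := ⋃ z : ℂ, (· + z • c) '' Z with hU
  have hsubW : U ⊆ W := by
    intro x hx
    simp only [hU, Set.mem_iUnion] at hx
    obtain ⟨z, y, hy, rfl⟩ := hx
    exact hWinv _ (hZW hy) z
  have hZtW : zClosure U ⊆ W := zClosure_min hsubW hWc
  have hZZt : Z ⊆ zClosure U := by
    intro y hy
    apply subset_zClosure
    exact Set.mem_iUnion.mpr ⟨0, ⟨y, hy, by simp⟩⟩
  have hmain : ∀ (C : Set (CS d)), IsZClosed C → {z : ℂ | ((· + z • c) '' Z) ⊆ C}.Infinite →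
      ∀ z : ℂ, ((· + z • c) '' Z) ⊆ C := by
    rintro C hC hinf z - ⟨y, hy, rfl⟩
    apply hC
    intro p hp
    exact vanish_on_line (x := y) (v := c) hinf
      (fun w hw => hp _ (hw ⟨y, hy, rfl⟩)) z
  have hZtirr : ZIrred (zClosure U) := by
    refine ⟨hZirr.1.mono (hZZt.trans (le_refl _)), ?_⟩
    intro C₁ C₂ h₁ h₂ hcover
    have hcover' : U ⊆ C₁ ∪ C₂ := (subset_zClosure U).trans hcover
    have htr : ∀ z : ℂ, ((· + z • c) '' Z) ⊆ C₁ ∨ ((· + z • c) '' Z) ⊆ C₂ := by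
      intro z
      apply (hZirr.translate (z • c)).2 _ _ h₁ h₂
      intro y hy
      exact hcover' (Set.mem_iUnion.mpr ⟨z, hy⟩)
    set S₁ : Set ℂ := {z : ℂ | ((· + z • c) '' Z) ⊆ C₁}
    set S₂ : Set ℂ := {z : ℂ | ((· + z • c) '' Z) ⊆ C₂}
    have hunion : S₁ ∪ S₂ = Set.univ := by
      ext z; simp only [Set.mem_union, Set.mem_univ, iff_true]; exact htr z
    have hinf : S₁.Infinite ∨ S₂.Infinite := by
      by_contra h
      push_neg at h
      have : (Set.univ : Set ℂ).Finite := hunion ▸ h.1.union h.2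
      exact Set.infinite_univ this
    rcases hinf with h | h
    · left
      apply zClosure_min _ h₁
      intro y hy
      simp only [hU, Set.mem_iUnion] at hy
      obtain ⟨z, hz⟩ := hy
      exact hmain C₁ h₁ h z hz
    · right
      apply zClosure_min _ h₂
      intro y hy
      simp only [hU, Set.mem_iUnion] at hy
      obtain ⟨z, hz⟩ := hy
      exact hmain C₂ h₂ h z hz
  have hfix : zClosure U = Z := hZmax _ isZClosed_zClosure hZtirr hZZt hZtW
  intro x hx z
  rw [← hfix]
  apply subset_zClosure
  exact Set.mem_iUnion.mpr ⟨z, ⟨x, hx, rfl⟩⟩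

lemma zirred_subset_finset_biUnion {ι : Type*} (s : Finset ι) (C : ι → Set (CS d))
    (hcl : ∀ i ∈ s, IsZClosed (C i)) {Z : Set (CS d)} (hZ : ZIrred Z)
    (hsub : Z ⊆ ⋃ i ∈ s, C i) : ∃ i ∈ s, Z ⊆ C i := by
  classical
  induction s using Finset.induction_on with
  | empty =>
    obtain ⟨x, hx⟩ := hZ.1
    simp only [Finset.notMem_empty, Set.iUnion_of_empty, Set.iUnion_empty] at hsub
    exact absurd (hsub hx) (by simp)
  | @insert a s ha ih =>
    rw [Finset.set_biUnion_insert] at hsub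
    rcases hZ.2 _ _ (hcl a (Finset.mem_insert_self a s))
      (isZClosed_biUnion s C (fun i hi => hcl i (Finset.mem_insert_of_mem hi))) hsub with h | h
    · exact ⟨a, Finset.mem_insert_self a s, h⟩
    · obtain ⟨i, hi, hsi⟩ := ih (fun i hi => hcl i (Finset.mem_insert_of_mem hi)) h
      exact ⟨i, Finset.mem_insert_of_mem hi, hsi⟩

lemma isZClosed_affine (x₀ : CS d) (V : Submodule ℂ (CS d)) :
    IsZClosed {x : CS d | x - x₀ ∈ V} := by
  intro x hx
  by_contra hmem
  simp only [Set.mem_setOf_eq] at hmem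
  -- find a functional killing V but not x - x₀
  have hq : Submodule.mkQ V (x - x₀) ≠ 0 := by
    rw [Submodule.mkQ_apply, Ne, Submodule.Quotient.mk_eq_zero]
    exact hmem
  have : ¬ ∀ φ : Module.Dual ℂ (CS d ⧸ V), φ (Submodule.mkQ V (x - x₀)) = 0 := by
    rw [Module.forall_dual_apply_eq_zero_iff]
    exact hq
  push_neg at this
  obtain ⟨φ, hφ⟩ := this
  set L : CS d →ₗ[ℂ] ℂ := φ.comp (Submodule.mkQ V) with hL
  have hLV : ∀ v ∈ V, L v = 0 := by
    intro v hv
    simp only [hL, LinearMap.comp_apply, Submodule.mkQ_apply]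
    rw [(Submodule.Quotient.mk_eq_zero V).mpr hv, map_zero]
  have hLx : L (x - x₀) ≠ 0 := hφ
  -- the affine polynomial
  set p : MvPolynomial (Fin d) ℂ :=
    (∑ j : Fin d, MvPolynomial.C (L (Pi.single j 1)) * MvPolynomial.X j) -
      MvPolynomial.C (L x₀) with hp
  have heval : ∀ y : CS d, MvPolynomial.eval y p = L (y - x₀) := by
    intro y
    have hy : L y = ∑ j : Fin d, L ((Pi.single j 1 : CS d)) * y j := by
      conv_lhs => rw [show y = ∑ j : Fin d, Pi.single j (y j) from (Finset.univ_sum_single y).symm]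
      rw [map_sum]
      congr 1
      funext j
      have hone : Pi.single j (y j) = y j • (Pi.single j (1:ℂ) : CS d) := by
        funext k
        by_cases hk : k = j
        · subst hk; simp
        · simp [Pi.single_apply, hk]
      rw [hone, map_smul, smul_eq_mul, mul_comm]
    simp only [hp, map_sub, map_sum, map_mul, MvPolynomial.eval_C, MvPolynomial.eval_X]
    rw [hy]
  have := hx p (by
    intro y hy
    rw [heval]
    exact hLV _ hy)
  rw [heval] at this
  exact hLx this


def cellSet (w : Fin n → ℕ) (S : Finset (Fin n)) : Set (Fin n → ℕ) :=
  {e | ∃ v : Fin n → ℕ, (∀ i ∉ S, v i = 0) ∧ e = w + v}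

lemma upclosed_minimal_exists (I : Set (Fin n → ℕ)) :
    ∀ e ∈ I, ∃ g ∈ I, g ≤ e ∧ ∀ g' ∈ I, g' ≤ g → g' = g := by
  have main : ∀ (k : ℕ) (e : Fin n → ℕ), (∑ i, e i) = k → e ∈ I →
      ∃ g ∈ I, g ≤ e ∧ ∀ g' ∈ I, g' ≤ g → g' = g := by
    intro k
    induction k using Nat.strong_induction_on with
    | _ k ih =>
      intro e hsum he
      by_cases hmin : ∀ g' ∈ I, g' ≤ e → g' = e
      · exact ⟨e, he, le_refl e, hmin⟩
      · push_neg at hmin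
        obtain ⟨e', he', hle, hne⟩ := hmin
        have hlt : (∑ i, e' i) < k := by
          rw [← hsum]
          apply Finset.sum_lt_sum (fun i _ => hle i)
          by_contra hc
          push_neg at hc
          exact hne (le_antisymm hle (fun i => hc i (Finset.mem_univ i)))
        obtain ⟨g, hg, hge, hgmin⟩ := ih _ hlt e' rfl he'
        exact ⟨g, hg, hge.trans hle, hgmin⟩
  intro e he
  exact main _ e rfl he

lemma minimals_finite (I : Set (Fin n → ℕ)) :
    {g | g ∈ I ∧ ∀ g' ∈ I, g' ≤ g → g' = g}.Finite := by
  by_contra hinf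
  have hinf' : {g | g ∈ I ∧ ∀ g' ∈ I, g' ≤ g → g' = g}.Infinite := hinf
  set f := hinf'.natEmbedding with hf
  obtain ⟨i, j, hij, hle'⟩ := Set.isPWO_of_wellQuasiOrderedLE (Set.univ : Set (Fin n →₀ ℕ))
    (fun k => ⟨Finsupp.equivFunOnFinite.symm ((f k).1), Set.mem_univ _⟩)
  have hle : (f i).1 ≤ (f j).1 := by
    intro x
    have := Finsupp.le_def.mp hle' x
    simpa using this
  have : (f i).1 = (f j).1 := (f j).2.2 _ (f i).2.1 hle
  have : f i = f j := Subtype.ext this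
  exact absurd (f.injective this) (Nat.ne_of_lt hij)

lemma cell_cover (I : Set (Fin n → ℕ)) (hup : ∀ e ∈ I, ∀ v, e + v ∈ I) :
    ∃ B : ℕ, ∀ e ∉ I, ∃ (w : Fin n → ℕ) (S : Finset (Fin n)),
      (∀ i, w i ≤ B) ∧ e ∈ cellSet w S ∧ ∀ e' ∈ cellSet w S, e' ∉ I := by
  classical
  set Min := {g | g ∈ I ∧ ∀ g' ∈ I, g' ≤ g → g' = g} with hMin
  have hfin := minimals_finite I
  set MF := hfin.toFinset with hMF
  set B := MF.sup (fun g => Finset.univ.sup g) with hB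
  refine ⟨B, ?_⟩
  intro e he
  -- choice of a coordinate where e is below each minimal element
  have hχ : ∀ g, g ∈ MF → ∃ i, e i < g i := by
    intro g hg
    rw [hMF, Set.Finite.mem_toFinset] at hg
    by_contra h
    push_neg at h
    have hge : g ≤ e := fun i => h i
    obtain ⟨v, hv⟩ : ∃ v, e = g + v := by
      refine ⟨fun i => e i - g i, ?_⟩
      funext i
      simp [Nat.add_sub_cancel' (hge i)]
    exact he (hv ▸ hup g hg.1 v)
  choose χ hχlt using hχ
  set T : Finset (Fin n) := MF.attach.image (fun g => χ g.1 g.2) with hT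
  set w : Fin n → ℕ := fun i => if i ∈ T then e i else 0 with hw
  set S : Finset (Fin n) := Tᶜ with hS
  refine ⟨w, S, ?_, ?_, ?_⟩
  · -- bound
    intro i
    by_cases hi : i ∈ T
    · simp only [hw, hi, if_true]
      rw [hT] at hi
      obtain ⟨g, hg, rfl⟩ := Finset.mem_image.mp hi
      calc e (χ g.1 g.2) ≤ g.1 (χ g.1 g.2) := le_of_lt (hχlt g.1 g.2)
        _ ≤ Finset.univ.sup g.1 := Finset.le_sup (Finset.mem_univ _)
        _ ≤ B := Finset.le_sup g.2
    · simp [hw, hi]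
  · -- e in the cell
    refine ⟨fun i => if i ∈ T then 0 else e i, ?_, ?_⟩
    · intro i hi
      rw [hS, Finset.mem_compl, not_not] at hi
      simp [hi]
    · funext i
      by_cases hi : i ∈ T <;> simp [hw, hi]
  · -- cell misses I
    rintro e' ⟨v, hv0, rfl⟩ hmem
    obtain ⟨g, hg, hge, hgmin⟩ := upclosed_minimal_exists I _ hmem
    have hgMF : g ∈ MF := by
      rw [hMF, Set.Finite.mem_toFinset]
      exact ⟨hg, hgmin⟩
    set i₀ := χ g hgMF with hi₀
    have hi₀T : i₀ ∈ T := by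
      rw [hT]
      exact Finset.mem_image.mpr ⟨⟨g, hgMF⟩, Finset.mem_attach _ _, rfl⟩
    have hvi : v i₀ = 0 := hv0 i₀ (by rw [hS]; simp [hi₀T])
    have : (w + v) i₀ = e i₀ := by
      simp only [Pi.add_apply, hvi, hw, hi₀T, if_true, add_zero]
    have hcontra := hge i₀
    rw [this] at hcontra
    exact absurd hcontra (not_le.mpr (hχlt g hgMF))


lemma col_mem_NA (a : Fin n → Lat d) (i : Fin n) : a i ∈ NA a :=
  AddSubmonoid.subset_closure ⟨i, rfl⟩

/-- ℕ-linear combination map. -/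
def phiN (a : Fin n → Lat d) : (Fin n → ℕ) →+ Lat d where
  toFun e := ∑ i, (e i) • a i
  map_zero' := by simp
  map_add' e f := by
    simp only [Pi.add_apply, add_smul, add_nsmul]
    rw [← Finset.sum_add_distrib]

lemma phiN_apply (a : Fin n → Lat d) (e : Fin n → ℕ) : phiN a e = ∑ i, (e i) • a i := rfl

lemma phiN_mem (a : Fin n → Lat d) (e : Fin n → ℕ) : phiN a e ∈ NA a := by
  rw [phiN_apply]
  exact sum_mem (fun i _ => nsmul_mem (col_mem_NA a i) (e i))

lemma NA_eq_mrange (a : Fin n → Lat d) : NA a = AddMonoidHom.mrange (phiN a) := by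
  apply le_antisymm
  · apply AddSubmonoid.closure_le.mpr
    rintro x ⟨i, rfl⟩
    refine ⟨Pi.single i 1, ?_⟩
    rw [phiN_apply, Finset.sum_eq_single i]
    · simp
    · intro j _ hj
      simp [Pi.single_apply, hj]
    · intro h
      exact absurd (Finset.mem_univ i) h
  · rintro x ⟨e, rfl⟩
    exact phiN_mem a e

lemma exists_int_rel (a : Fin n → Lat d) {σ : Lat d} {S : Finset (Fin n)}
    (h : toC σ ∈ Submodule.span ℂ ((fun i => toC (a i)) '' ↑S)) :
    ∃ (D : ℕ) (z : Fin n → ℤ), 0 < D ∧ (∀ i ∉ S, z i = 0) ∧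
      (D : ℤ) • σ = ∑ i, z i • a i := by
  classical
  set aQ : Fin n → (Fin d → ℚ) := fun i j => ((a i j : ℤ) : ℚ) with haQ
  set σQ : Fin d → ℚ := fun j => ((σ j : ℤ) : ℚ) with hσQ
  -- step 1 : toC σ ∈ ℂ-span implies σQ ∈ ℚ-span
  have hQ : σQ ∈ Submodule.span ℚ ((fun i => aQ i) '' ↑S) := by
    by_contra hnot
    set V := Submodule.span ℚ ((fun i => aQ i) '' (↑S : Set (Fin n))) with hV
    have hq : V.mkQ σQ ≠ 0 := by
      rw [Submodule.mkQ_apply, Ne, Submodule.Quotient.mk_eq_zero]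
      exact hnot
    have hd : ¬ ∀ φ : Module.Dual ℚ ((Fin d → ℚ) ⧸ V), φ (V.mkQ σQ) = 0 := by
      rw [Module.forall_dual_apply_eq_zero_iff]
      exact hq
    push_neg at hd
    obtain ⟨φ, hφ⟩ := hd
    set ℓ : (Fin d → ℚ) →ₗ[ℚ] ℚ := φ.comp V.mkQ with hℓ
    have hℓV : ∀ v ∈ V, ℓ v = 0 := by
      intro v hv
      simp only [hℓ, LinearMap.comp_apply, Submodule.mkQ_apply]
      rw [(Submodule.Quotient.mk_eq_zero V).mpr hv, map_zero]
    have hℓσ : ℓ σQ ≠ 0 := hφ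
    -- expand any rational vector over the standard basis
    have hexp : ∀ y : Fin d → ℚ, ℓ y = ∑ j : Fin d, (ℓ (Pi.single j 1)) * y j := by
      intro y
      conv_lhs => rw [show y = ∑ j : Fin d, Pi.single j (y j) from (Finset.univ_sum_single y).symm]
      rw [map_sum]
      congr 1
      funext j
      have hone : Pi.single j (y j) = y j • (Pi.single j (1:ℚ) : Fin d → ℚ) := by
        funext k
        by_cases hk : k = j
        · subst hk; simp
        · simp [Pi.single_apply, hk]
      rw [hone, map_smul, smul_eq_mul, mul_comm]
    -- the complex linear functional with the same (rational) coefficients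
    set L : CS d →ₗ[ℂ] ℂ :=
      { toFun := fun x => ∑ j : Fin d, ((ℓ (Pi.single j 1) : ℚ) : ℂ) * x j
        map_add' := by
          intro x y
          simp only [Pi.add_apply, mul_add]
          rw [← Finset.sum_add_distrib]
        map_smul' := by
          intro r x
          simp only [Pi.smul_apply, smul_eq_mul, RingHom.id_apply, Finset.mul_sum]
          congr 1
          funext j
          ring } with hLdef
    have hLtoC : ∀ y : Lat d, L (toC y) = ((ℓ (fun j => ((y j : ℤ) : ℚ)) : ℚ) : ℂ) := by
      intro y
      rw [hexp]
      push_cast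
      rfl
    have hLa : ∀ x ∈ ((fun i => toC (a i)) '' (↑S : Set (Fin n))), L x = 0 := by
      rintro - ⟨i, hi, rfl⟩
      rw [hLtoC]
      have : ℓ (aQ i) = 0 := hℓV _ (Submodule.subset_span ⟨i, hi, rfl⟩)
      rw [show (fun j => ((a i j : ℤ) : ℚ)) = aQ i from rfl, this]
      simp
    have hker : Submodule.span ℂ ((fun i => toC (a i)) '' ↑S) ≤ LinearMap.ker L := by
      rw [Submodule.span_le]
      intro x hx
      exact LinearMap.mem_ker.mpr (hLa x hx)
    have : L (toC σ) = 0 := hker h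
    rw [hLtoC] at this
    have : ℓ σQ = 0 := by exact_mod_cast this
    exact hℓσ this
  -- step 2 : clear denominators
  have key : ∀ x ∈ Submodule.span ℚ ((fun i => aQ i) '' (↑S : Set (Fin n))),
      ∃ D : ℕ, 0 < D ∧ (D : ℚ) • x ∈ Submodule.span ℤ ((fun i => aQ i) '' (↑S : Set (Fin n))) := by
    intro x hx
    induction hx using Submodule.span_induction with
    | mem x hmem => exact ⟨1, Nat.one_pos, by simpa using Submodule.subset_span hmem⟩
    | zero => exact ⟨1, Nat.one_pos, by simp⟩
    | add x y hx hy ih₁ ih₂ =>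
      obtain ⟨D₁, hD₁, h₁⟩ := ih₁
      obtain ⟨D₂, hD₂, h₂⟩ := ih₂
      refine ⟨D₁ * D₂, Nat.mul_pos hD₁ hD₂, ?_⟩
      have : ((D₁ * D₂ : ℕ) : ℚ) • (x + y) =
          (D₂ : ℤ) • ((D₁ : ℚ) • x) + (D₁ : ℤ) • ((D₂ : ℚ) • y) := by
        push_cast
        simp only [← Int.cast_smul_eq_zsmul ℚ]
        push_cast
        rw [smul_add]
        rw [smul_smul, smul_smul]
        ring_nf
      rw [this]
      exact Submodule.add_mem _ (Submodule.smul_mem _ _ h₁) (Submodule.smul_mem _ _ h₂)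
    | smul r x _ ih =>
      obtain ⟨D, hD, h₁⟩ := ih
      refine ⟨D * r.den, Nat.mul_pos hD r.pos, ?_⟩
      have : ((D * r.den : ℕ) : ℚ) • (r • x) = (r.num : ℤ) • ((D : ℚ) • x) := by
        simp only [← Int.cast_smul_eq_zsmul ℚ]
        rw [smul_smul, smul_smul]
        congr 1
        push_cast
        rw [mul_assoc, show (r.den : ℚ) * r = (r.num : ℚ) from by rw [mul_comm, Rat.mul_den_eq_num]]
        ring
      rw [this]
      exact Submodule.smul_mem _ _ h₁
  obtain ⟨D, hD, hmem⟩ := key _ hQ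
  rw [Finsupp.mem_span_image_iff_linearCombination] at hmem
  obtain ⟨l, hl, hsum⟩ := hmem
  refine ⟨D, fun i => l i, hD, ?_, ?_⟩
  · intro i hi
    exact Finsupp.notMem_support_iff.mp (fun hc => hi (hl hc))
  · -- transfer the ℚ-equation to ℤ coordinates
    have hsum' : (D : ℚ) • σQ = ∑ i : Fin n, (l i) • aQ i := by
      rw [← hsum, Finsupp.linearCombination_apply, Finsupp.sum_fintype]
      intro i; simp
    funext j
    have hcoord := congrFun hsum' j
    simp only [Pi.smul_apply, Finset.sum_apply, smul_eq_mul, zsmul_eq_mul, Pi.mul_apply,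
      Pi.intCast_apply, hσQ, haQ] at hcoord
    show ((D : ℤ) • σ) j = (∑ i : Fin n, l i • a i) j
    simp only [Pi.smul_apply, Finset.sum_apply, smul_eq_mul]
    exact_mod_cast hcoord



/-! ### good cells avoid the localizing direction -/

lemma good_cell_no_direction (a : Fin n → Lat d) {σ : Lat d} (hσ : σ ∈ NA a) (K : ℕ)
    {w : Fin n → ℕ} {S : Finset (Fin n)}
    (hdisj : ∀ e' ∈ cellSet w S, ¬ ∃ u ∈ NA a, phiN a e' = K • σ + u) :
    toC σ ∉ Submodule.span ℂ ((fun i => toC (a i)) '' ↑S) := by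
  intro hmem
  obtain ⟨D, z, hD, hz0, hrel⟩ := exists_int_rel a hmem
  set p : Fin n → ℕ := fun i => (z i).toNat with hp
  set q : Fin n → ℕ := fun i => (-(z i)).toNat with hq
  have hcell : (w + K • p) ∈ cellSet w S :=
    ⟨K • p, fun i hi => by simp [hp, Pi.smul_apply, hz0 i hi], rfl⟩
  apply hdisj _ hcell
  have hterm : ∀ i : Fin n, (p i) • a i = z i • a i + (q i) • a i := by
    intro i
    rw [← natCast_zsmul (a i) (p i), ← natCast_zsmul (a i) (q i), ← add_zsmul]
    congr 1
    simp only [hp, hq]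
    omega
  have hpq : phiN a p = D • σ + phiN a q := by
    rw [phiN_apply, phiN_apply]
    calc ∑ i, (p i) • a i = ∑ i, (z i • a i + (q i) • a i) := by
          exact Finset.sum_congr rfl (fun i _ => hterm i)
      _ = (∑ i, z i • a i) + ∑ i, (q i) • a i := Finset.sum_add_distrib
      _ = (D : ℤ) • σ + ∑ i, (q i) • a i := by rw [hrel]
      _ = D • σ + ∑ i, (q i) • a i := by rw [natCast_zsmul]
  have hKD : K + (K * D - K) = K * D := by
    have : K ≤ K * D := Nat.le_mul_of_pos_right K hD
    omega
  refine ⟨(K * D - K) • σ + phiN a w + K • phiN a q,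
    add_mem (add_mem (nsmul_mem hσ _) (phiN_mem a w)) (nsmul_mem (phiN_mem a q) K), ?_⟩
  have hs1 : K • (D • σ) = (K * D) • σ := smul_smul K D σ
  have hs2 : (K * D) • σ = K • σ + (K * D - K) • σ := by
    rw [← add_nsmul, hKD]
  calc phiN a (w + K • p) = phiN a w + K • phiN a p := by
        rw [map_add, AddMonoidHom.map_nsmul]
    _ = phiN a w + K • (D • σ) + K • phiN a q := by
        rw [hpq, smul_add, ← add_assoc]
    _ = K • σ + ((K * D - K) • σ + phiN a w + K • phiN a q) := by
        rw [hs1, hs2]; abel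

/-! ### survTdeg and qdegLoc basics -/

lemma sigmaF_mem (a : Fin n → Lat d) (H : Set (Fin n)) : sigmaF a H ∈ NA a := by
  rw [sigmaF]
  refine sum_mem (fun i _ => ?_)
  by_cases hi : i ∈ H
  · rw [if_pos hi]; exact col_mem_NA a i
  · rw [if_neg hi]; exact zero_mem _

section SurvLemmas
variable {a : Fin n → Lat d} {M : Type} [AddCommGroup M] [Module ℂ M]

lemma act_comp (g : GradedSAMod a M) {u v : Lat d} (hu : u ∈ NA a) (hv : v ∈ NA a) (m : M) :
    g.act (u + v) (add_mem hu hv) m = g.act u hu (g.act v hv m) := by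
  rw [g.act_add u hu v hv (add_mem hu hv)]
  rfl

lemma act_congr (g : GradedSAMod a M) {u v : Lat d} (h : u = v) (hu : u ∈ NA a)
    (hv : v ∈ NA a) (m : M) : g.act u hu m = g.act v hv m := by
  subst h
  rfl

lemma act_congr' (g : GradedSAMod a M) {u v : Lat d} (h : u = v) (hu : u ∈ NA a)
    (hv : v ∈ NA a) : g.act u hu = g.act v hv := by
  subst h
  rfl

lemma surv_shift (g : GradedSAMod a M) (H : Set (Fin n)) {γ : Lat d}
    (hγ : γ ∈ g.survTdeg H) : γ + sigmaF a H ∈ g.survTdeg H := by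
  obtain ⟨m, hm, hne, hsur⟩ := hγ
  refine ⟨g.act (sigmaF a H) (sigmaF_mem a H) m, g.act_grade _ _ _ m hm, ?_, ?_⟩
  · have h1 := hsur 1 (nsmul_mem (sigmaF_mem a H) 1)
    rwa [act_congr g (one_smul ℕ (sigmaF a H)) _ (sigmaF_mem a H)] at h1
  · intro k hk
    have hadd : (k + 1) • sigmaF a H = k • sigmaF a H + sigmaF a H := by
      rw [add_nsmul, one_nsmul]
    have h2 := hsur (k + 1) (nsmul_mem (sigmaF_mem a H) (k + 1))
    rw [act_congr g hadd _ (add_mem hk (sigmaF_mem a H)), act_comp g hk (sigmaF_mem a H)] at h2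
    exact h2

lemma surv_subset (g : GradedSAMod a M) {F G : Set (Fin n)} (hFG : F ⊆ G) :
    g.survTdeg G ⊆ g.survTdeg F := by
  rintro γ ⟨m, hm, hne, hsur⟩
  refine ⟨m, hm, hne, ?_⟩
  intro k hk h0
  -- σ_G = σ_F + τ with τ ∈ ℕA
  set τ : Lat d := ∑ i, if i ∈ G \ F then a i else 0 with hτ
  have hτmem : τ ∈ NA a := by
    rw [hτ]
    refine sum_mem (fun i _ => ?_)
    by_cases hi : i ∈ G \ F
    · rw [if_pos hi]; exact col_mem_NA a i
    · rw [if_neg hi]; exact zero_mem _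
  have hsplit : sigmaF a G = sigmaF a F + τ := by
    rw [sigmaF, sigmaF, hτ, ← Finset.sum_add_distrib]
    refine Finset.sum_congr rfl (fun i _ => ?_)
    by_cases hiF : i ∈ F
    · have hiG : i ∈ G := hFG hiF
      have : i ∉ G \ F := fun hc => hc.2 hiF
      simp [hiF, hiG, this]
    · by_cases hiG : i ∈ G
      · have : i ∈ G \ F := ⟨hiG, hiF⟩
        simp [hiF, hiG, this]
      · have : i ∉ G \ F := fun hc => hiG hc.1
        simp [hiF, hiG, this]
  have hkG : k • sigmaF a G = k • τ + k • sigmaF a F := by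
    rw [hsplit, smul_add]; abel
  apply hsur k (nsmul_mem (sigmaF_mem a G) k)
  rw [act_congr g hkG _ (add_mem (nsmul_mem hτmem k) (nsmul_mem (sigmaF_mem a F) k)),
    act_comp g (nsmul_mem hτmem k) (nsmul_mem (sigmaF_mem a F) k), h0, map_zero]

lemma surv_split (g : GradedSAMod a M) (F G : Set (Fin n)) {γ : Lat d}
    (hγ : γ ∈ g.survTdeg F) :
    γ ∈ g.survTdeg G ∨ (∃ m : M, m ∈ g.decomp γ ∧ m ≠ 0 ∧
      ∃ k : ℕ, g.act (k • sigmaF a G) (nsmul_mem (sigmaF_mem a G) k) m = 0) := by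
  obtain ⟨m, hm, hne, hsur⟩ := hγ
  by_cases htor : ∃ k : ℕ, g.act (k • sigmaF a G) (nsmul_mem (sigmaF_mem a G) k) m = 0
  · exact Or.inr ⟨m, hm, hne, htor⟩
  · push_neg at htor
    exact Or.inl ⟨m, hm, hne, fun k hk => htor k⟩

lemma qdegLoc_eq (g : GradedSAMod a M) (H : Set (Fin n)) :
    g.qdegLoc H = zClosure (toC '' g.survTdeg H) := by
  apply le_antisymm
  · -- each k-piece is inside the closure
    rw [GradedSAMod.qdegLoc]
    apply Set.iUnion_subset
    intro k
    apply zClosure_min _ isZClosed_zClosure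
    rintro - ⟨γ, hγ, rfl⟩
    have hδ : γ + k • sigmaF a H ∈ g.survTdeg H := hγ
    have hx : toC (γ + k • sigmaF a H) ∈ zClosure (toC '' g.survTdeg H) :=
      subset_zClosure _ ⟨_, hδ, rfl⟩
    have := zClosure_line_stable (fun δ hδ' => surv_shift g H hδ') hx (-(k : ℂ))
    have heq : toC (γ + k • sigmaF a H) + (-(k:ℂ)) • toC (sigmaF a H) = toC γ := by
      rw [toC_add_nsmul]
      funext j
      simp only [Pi.add_apply, Pi.smul_apply, smul_eq_mul]
      ring
    rwa [heq] at this
  · -- the closure is the k = 0 piece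
    rw [GradedSAMod.qdegLoc]
    refine le_trans ?_ (Set.subset_iUnion _ 0)
    have : {γ : Lat d | γ + (0 : ℕ) • sigmaF a H ∈ g.survTdeg H} = g.survTdeg H := by
      ext γ
      simp
    rw [this]

end SurvLemmas

/-! ### degrees of torsion elements -/

section ModuleGlue
variable {a : Fin n → Lat d} {M : Type} [AddCommGroup M] [Module ℂ M]

/-- The monoid map from exponents to graded-module endomorphisms. -/
def muG (g : GradedSAMod a M) : Multiplicative (Fin n →₀ ℕ) →* Module.End ℂ M where
  toFun e := g.act (phiN a ⇑(Multiplicative.toAdd e)) (phiN_mem a _)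
  map_one' := by
    have h0 : phiN a ⇑(Multiplicative.toAdd (1 : Multiplicative (Fin n →₀ ℕ))) = 0 := by
      have hz : ⇑(Multiplicative.toAdd (1 : Multiplicative (Fin n →₀ ℕ))) = (0 : Fin n → ℕ) := by
        funext i; rfl
      rw [hz, map_zero]
    show g.act (phiN a ⇑(Multiplicative.toAdd (1 : Multiplicative (Fin n →₀ ℕ))))
      (phiN_mem a _) = 1
    rw [act_congr' g h0 _ (zero_mem _), g.act_zero]
    rfl
  map_mul' x y := by
    have hadd : phiN a ⇑(Multiplicative.toAdd (x * y)) =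
        phiN a ⇑(Multiplicative.toAdd x) + phiN a ⇑(Multiplicative.toAdd y) := by
      rw [← map_add]
      congr 1
    show g.act (phiN a ⇑(Multiplicative.toAdd (x * y))) (phiN_mem a _) =
      g.act (phiN a ⇑(Multiplicative.toAdd x)) (phiN_mem a _) *
        g.act (phiN a ⇑(Multiplicative.toAdd y)) (phiN_mem a _)
    rw [act_congr' g hadd _ (add_mem (phiN_mem a _) (phiN_mem a _))]
    apply LinearMap.ext
    intro m
    rw [act_comp g (phiN_mem a _) (phiN_mem a _)]
    rfl

/-- The algebra map from the polynomial ring to endomorphisms. -/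
def PsiA (g : GradedSAMod a M) : MvPolynomial (Fin n) ℂ →ₐ[ℂ] Module.End ℂ M :=
  AddMonoidAlgebra.lift ℂ (Module.End ℂ M) (Fin n →₀ ℕ) (muG g)

lemma PsiA_monomial (g : GradedSAMod a M) (e : Fin n →₀ ℕ) (c : ℂ) (m : M) :
    PsiA g (MvPolynomial.monomial e c) m = c • g.act (phiN a ⇑e) (phiN_mem a _) m := by
  have h1 : PsiA g (MvPolynomial.monomial e c) = c • (muG g (Multiplicative.ofAdd e)) := by
    rw [← MvPolynomial.single_eq_monomial]
    exact AddMonoidAlgebra.lift_single _ _ _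
  rw [h1]
  rfl

lemma torsion_degrees_cover (a : Fin n → Lat d) {M : Type} [AddCommGroup M] [Module ℂ M]
    (g : GradedSAMod a M) (hfg : g.FGmod) (σ : Lat d) (hσ : σ ∈ NA a) :
    ∃ (K : ℕ) (Bs : Finset (Lat d)),
      ∀ (γ : Lat d) (m : M), m ∈ g.decomp γ → m ≠ 0 →
        (∃ k : ℕ, g.act (k • σ) (nsmul_mem hσ k) m = 0) →
        ∃ β ∈ Bs, ∃ e : Fin n → ℕ,
          (¬ ∃ u ∈ NA a, phiN a e = K • σ + u) ∧ γ = β + phiN a e := by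
  classical
  letI : Module (MvPolynomial (Fin n) ℂ) M := Module.compHom M (PsiA g).toRingHom
  have hsmul : ∀ (p : MvPolynomial (Fin n) ℂ) (m : M), p • m = PsiA g p m := fun _ _ => rfl
  have hCsmul : ∀ (r : ℂ) (m : M), (MvPolynomial.C r : MvPolynomial (Fin n) ℂ) • m = r • m := by
    intro r m
    rw [hsmul]
    rw [show (MvPolynomial.C r : MvPolynomial (Fin n) ℂ) =
      algebraMap ℂ (MvPolynomial (Fin n) ℂ) r from rfl, AlgHom.commutes]
    rfl
  have hmono_smul : ∀ (e : Fin n →₀ ℕ) (c : ℂ) (m : M),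
      (MvPolynomial.monomial e c : MvPolynomial (Fin n) ℂ) • m =
        c • g.act (phiN a ⇑e) (phiN_mem a _) m :=
    fun e c m => PsiA_monomial g e c m
  have hcomm : ∀ (u : Lat d) (hu : u ∈ NA a) (p : MvPolynomial (Fin n) ℂ) (m : M),
      g.act u hu (p • m) = p • g.act u hu m := by
    intro u hu p m
    induction p using MvPolynomial.induction_on' with
    | monomial e c =>
      rw [hmono_smul, hmono_smul, LinearMap.map_smul]
      congr 1
      rw [← act_comp g hu (phiN_mem a _), ← act_comp g (phiN_mem a _) hu]
      exact act_congr g (add_comm _ _) _ _ m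
    | add p q ihp ihq =>
      rw [add_smul, add_smul, LinearMap.map_add, ihp, ihq]
  -- finite generation over the polynomial ring
  obtain ⟨Sfin, hSfin⟩ := hfg
  have htop : ∀ m : M, m ∈ Submodule.span (MvPolynomial (Fin n) ℂ) (↑Sfin : Set M) := by
    intro m
    have hm := hSfin m
    induction hm using Submodule.span_induction with
    | mem x hx =>
      obtain ⟨u, hu, s, hs, rfl⟩ := hx
      obtain ⟨e0, he0⟩ := (NA_eq_mrange a ▸ hu : u ∈ AddMonoidHom.mrange (phiN a))
      set e : Fin n →₀ ℕ := Finsupp.equivFunOnFinite.symm e0 with he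
      have hcoe : ⇑e = e0 := by
        rw [he]
        exact Finsupp.equivFunOnFinite.apply_symm_apply e0
      have : g.act u hu s = (MvPolynomial.monomial e 1 : MvPolynomial (Fin n) ℂ) • s := by
        rw [hmono_smul, one_smul]
        exact act_congr g (by rw [hcoe, he0]) _ _ s
      rw [this]
      exact Submodule.smul_mem _ _ (Submodule.subset_span hs)
    | zero => exact Submodule.zero_mem _
    | add x y hx hy ihx ihy => exact Submodule.add_mem _ ihx ihy
    | smul r x hx ih =>
      rw [← hCsmul]
      exact Submodule.smul_mem _ _ ih
  letI : Module.Finite (MvPolynomial (Fin n) ℂ) M :=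
    Module.finite_def.mpr ⟨Sfin, Submodule.eq_top_iff'.mpr htop⟩
  letI : IsNoetherian (MvPolynomial (Fin n) ℂ) M :=
    isNoetherian_of_isNoetherianRing_of_finite (MvPolynomial (Fin n) ℂ) M
  -- the torsion submodule
  have hstep : ∀ (k j : ℕ) (m : M), g.act (k • σ) (nsmul_mem hσ k) m = 0 →
      g.act ((k + j) • σ) (nsmul_mem hσ (k + j)) m = 0 := by
    intro k j m hm
    have hsplit : (k + j) • σ = j • σ + k • σ := by rw [add_nsmul]; abel
    rw [act_congr g hsplit _ (add_mem (nsmul_mem hσ j) (nsmul_mem hσ k)),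
      act_comp g (nsmul_mem hσ j) (nsmul_mem hσ k), hm, map_zero]
  set N : Submodule (MvPolynomial (Fin n) ℂ) M :=
    { carrier := {m : M | ∃ k : ℕ, g.act (k • σ) (nsmul_mem hσ k) m = 0}
      add_mem' := by
        rintro m₁ m₂ ⟨k₁, h₁⟩ ⟨k₂, h₂⟩
        refine ⟨k₁ + k₂, ?_⟩
        rw [LinearMap.map_add, hstep k₁ k₂ m₁ h₁, zero_add,
          act_congr g (show (k₁ + k₂) • σ = (k₂ + k₁) • σ by rw [add_comm]) _
            (nsmul_mem hσ (k₂ + k₁)), hstep k₂ k₁ m₂ h₂]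
      zero_mem' := ⟨0, map_zero _⟩
      smul_mem' := by
        rintro p m ⟨k, hk⟩
        exact ⟨k, by rw [hcomm, hk, smul_zero]⟩ } with hN
  obtain ⟨L, v, hv⟩ := Submodule.fg_iff_exists_fin_generating_family.mp (IsNoetherian.noetherian N)
  -- direct sum machinery
  set eqv := LinearEquiv.ofBijective (DirectSum.coeLinearMap g.decomp) g.internal with heqv
  set projL : Lat d → (M →ₗ[ℂ] M) := fun γ =>
    (g.decomp γ).subtype.comp
      ((DirectSum.component ℂ (Lat d) (fun γ' => ↥(g.decomp γ')) γ).comp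
        (eqv.symm : M →ₗ[ℂ] _)) with hprojL
  have hproj_mem : ∀ γ m, projL γ m ∈ g.decomp γ := fun γ m => ((eqv.symm m) γ).2
  have hproj_same : ∀ (γ : Lat d) (m : M), m ∈ g.decomp γ → projL γ m = m := by
    intro γ m hm
    show ((eqv.symm m) γ : M) = m
    rw [DirectSum.IsInternal.ofBijective_coeLinearMap_of_mem g.internal hm]
  have hproj_ne : ∀ (γ γ' : Lat d) (m : M), m ∈ g.decomp γ → γ ≠ γ' → projL γ' m = 0 := by
    intro γ γ' m hm hne
    show ((eqv.symm m) γ' : M) = 0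
    rw [DirectSum.IsInternal.ofBijective_coeLinearMap_of_mem_ne g.internal hne hm]
    rfl
  have hsum_proj : ∀ m : M, m = ∑ γ ∈ (DFinsupp.support (eqv.symm m)), projL γ m := by
    intro m
    have h2 : eqv.symm m = ∑ γ ∈ (DFinsupp.support (eqv.symm m)),
        DirectSum.of (fun γ' => ↥(g.decomp γ')) γ ((eqv.symm m) γ) :=
      (DirectSum.sum_support_of (eqv.symm m)).symm
    calc m = eqv (eqv.symm m) := (eqv.apply_symm_apply m).symm
      _ = ∑ γ ∈ (DFinsupp.support (eqv.symm m)),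
          eqv (DirectSum.of (fun γ' => ↥(g.decomp γ')) γ ((eqv.symm m) γ)) := by
          conv_lhs => rw [h2]
          exact map_sum eqv _ _
      _ = ∑ γ ∈ (DFinsupp.support (eqv.symm m)), projL γ m := by
          refine Finset.sum_congr rfl (fun γ _ => ?_)
          exact DirectSum.coeLinearMap_of g.decomp γ _
  have hactproj : ∀ (u : Lat d) (hu : u ∈ NA a) (γ : Lat d) (m : M),
      g.act u hu (projL γ m) = projL (γ + u) (g.act u hu m) := by
    intro u hu γ m
    have hrw : g.act u hu m = ∑ γ' ∈ (DFinsupp.support (eqv.symm m)),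
        g.act u hu (projL γ' m) := by
      conv_lhs => rw [hsum_proj m]
      exact map_sum _ _ _
    rw [hrw, map_sum]
    have hterm : ∀ γ' ∈ DFinsupp.support (eqv.symm m),
        projL (γ + u) (g.act u hu (projL γ' m)) =
          if γ' = γ then g.act u hu (projL γ' m) else 0 := by
      intro γ' _
      have hgr : g.act u hu (projL γ' m) ∈ g.decomp (γ' + u) :=
        g.act_grade u hu γ' _ (hproj_mem γ' m)
      by_cases hc : γ' = γ
      · subst hc
        rw [if_pos rfl]
        exact hproj_same _ _ hgr
      · rw [if_neg hc]
        exact hproj_ne _ _ _ hgr (fun hcc => hc (by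
          have := add_right_cancel hcc
          exact this))
    rw [Finset.sum_congr rfl hterm, Finset.sum_ite_eq' _ γ _]
    by_cases hγs : γ ∈ DFinsupp.support (eqv.symm m)
    · rw [if_pos hγs]
    · rw [if_neg hγs]
      have : projL γ m = 0 := by
        show ((eqv.symm m) γ : M) = 0
        rw [DFinsupp.notMem_support_iff.mp hγs]
        rfl
      rw [this, map_zero]
  -- homogeneous generators
  set P : Finset (Lat d × M) := (Finset.univ : Finset (Fin L)).biUnion
      (fun j => (DFinsupp.support (eqv.symm (v j))).image (fun γ => (γ, projL γ (v j)))) with hP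
  have hPdec : ∀ q ∈ P, q.2 ∈ g.decomp q.1 := by
    intro q hq
    rw [hP, Finset.mem_biUnion] at hq
    obtain ⟨j, _, hq2⟩ := hq
    obtain ⟨γ, _, rfl⟩ := Finset.mem_image.mp hq2
    exact hproj_mem γ (v j)
  have hPtor : ∀ q ∈ P, ∃ k : ℕ, g.act (k • σ) (nsmul_mem hσ k) q.2 = 0 := by
    intro q hq
    rw [hP, Finset.mem_biUnion] at hq
    obtain ⟨j, _, hq2⟩ := hq
    obtain ⟨γ, _, rfl⟩ := Finset.mem_image.mp hq2
    have hvN : v j ∈ N := by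
      rw [← hv]
      exact Submodule.subset_span ⟨j, rfl⟩
    obtain ⟨k, hk⟩ := hvN
    refine ⟨k, ?_⟩
    rw [hactproj _ _ γ (v j), hk, map_zero]
  have hKex : ∃ K : ℕ, ∀ q ∈ P, g.act (K • σ) (nsmul_mem hσ K) q.2 = 0 := by
    choose! f hf using hPtor
    refine ⟨P.sup f, ?_⟩
    intro q hq
    have hle : f q ≤ P.sup f := Finset.le_sup hq
    have := hstep (f q) (P.sup f - f q) q.2 (hf q hq)
    rwa [act_congr g (show (f q + (P.sup f - f q)) • σ = (P.sup f) • σ by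
      rw [Nat.add_sub_cancel' hle]) _ (nsmul_mem hσ _)] at this
  obtain ⟨K, hK⟩ := hKex
  refine ⟨K, P.image Prod.fst, ?_⟩
  intro γ m hm hne htor
  have hmN : m ∈ N := htor
  have hsubN : N ≤ Submodule.span (MvPolynomial (Fin n) ℂ)
      ((P.image Prod.snd : Finset M) : Set M) := by
    rw [← hv, Submodule.span_le]
    rintro x ⟨j, rfl⟩
    rw [hsum_proj (v j)]
    apply Submodule.sum_mem
    intro γ' hγ'
    apply Submodule.subset_span
    simp only [Finset.coe_image, Set.mem_image, Finset.mem_coe]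
    have hqP : (γ', projL γ' (v j)) ∈ P := by
      rw [hP]
      exact Finset.mem_biUnion.mpr ⟨j, Finset.mem_univ _, Finset.mem_image.mpr ⟨γ', hγ', rfl⟩⟩
    exact ⟨(γ', projL γ' (v j)), hqP, rfl⟩
  have hmspan := hsubN hmN
  rw [Submodule.mem_span_finset] at hmspan
  obtain ⟨cf, -, hcf⟩ := hmspan
  have hβex : ∀ m' ∈ P.image Prod.snd, ∃ β, (β, m') ∈ P := by
    intro m' hm'
    obtain ⟨q, hq, hq2⟩ := Finset.mem_image.mp hm'
    exact ⟨q.1, by rw [← hq2]; exact hq⟩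
  choose! β hβP using hβex
  have hexp : m = ∑ m' ∈ P.image Prod.snd, ∑ e ∈ (cf m').support,
      (MvPolynomial.coeff e (cf m')) • (g.act (phiN a ⇑e) (phiN_mem a _) m') := by
    rw [← hcf]
    refine Finset.sum_congr rfl (fun m' _ => ?_)
    conv_lhs => rw [(cf m').as_sum]
    rw [Finset.sum_smul]
    refine Finset.sum_congr rfl (fun e _ => ?_)
    rw [hmono_smul]
  have hANN : m = ∑ m' ∈ P.image Prod.snd, ∑ e ∈ (cf m').support,
      (MvPolynomial.coeff e (cf m')) •
        (if γ = β m' + phiN a ⇑e then g.act (phiN a ⇑e) (phiN_mem a _) m' else 0) := by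
    have h1 : projL γ m = m := hproj_same γ m hm
    conv_lhs => rw [← h1, hexp]
    rw [map_sum]
    refine Finset.sum_congr rfl (fun m' hm' => ?_)
    rw [map_sum]
    refine Finset.sum_congr rfl (fun e he => ?_)
    rw [LinearMap.map_smul]
    congr 1
    have hgr : g.act (phiN a ⇑e) (phiN_mem a _) m' ∈ g.decomp (β m' + phiN a ⇑e) :=
      g.act_grade _ _ _ m' (hPdec _ (hβP m' hm'))
    by_cases hc : γ = β m' + phiN a ⇑e
    · rw [if_pos hc, hc]
      exact hproj_same _ _ hgr
    · rw [if_neg hc]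
      exact hproj_ne _ _ _ hgr (fun hcc => hc hcc.symm)
  have hne2 : (∑ m' ∈ P.image Prod.snd, ∑ e ∈ (cf m').support,
      (MvPolynomial.coeff e (cf m')) •
        (if γ = β m' + phiN a ⇑e then g.act (phiN a ⇑e) (phiN_mem a _) m' else 0)) ≠ 0 := by
    rw [← hANN]; exact hne
  obtain ⟨m', hm', hne3⟩ := Finset.exists_ne_zero_of_sum_ne_zero hne2
  obtain ⟨e, he, hne4⟩ := Finset.exists_ne_zero_of_sum_ne_zero hne3
  by_cases hc : γ = β m' + phiN a ⇑e
  · have hactne : g.act (phiN a ⇑e) (phiN_mem a _) m' ≠ 0 := by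
      intro h0
      rw [if_pos hc, h0, smul_zero] at hne4
      exact hne4 rfl
    refine ⟨β m', Finset.mem_image.mpr ⟨(β m', m'), hβP m' hm', rfl⟩, ⇑e, ?_, hc⟩
    rintro ⟨u, hu, hequ⟩
    apply hactne
    have hequ' : phiN a ⇑e = u + K • σ := by rw [hequ, add_comm]
    rw [act_congr g hequ' _ (add_mem hu (nsmul_mem hσ K)), act_comp g hu (nsmul_mem hσ K),
      hK (β m', m') (hβP m' hm'), map_zero]
  · rw [if_neg hc, smul_zero] at hne4
    exact absurd rfl hne4

end ModuleGlue


/-- For a finitely generated ℤ^d-graded S_A-module `M` and faces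
`F ⪯ G ⪯ A`, a subset `Z ⊆ qdeg M[∂^{−G}]` is an irreducible component of
qdeg M[∂^{−G}] iff it is one of qdeg M[∂^{−F}]; in particular
qdeg M[∂^{−G}] ⊆ qdeg M[∂^{−F}]. -/
theorem qdegLoc_irreducible_components
    {d n : ℕ} (hd : 0 < d) (hn : 0 < n) (a : Fin n → Lat d)
    (hZA : SpansZ a) (hPt : Pointed a)
    (F G : Set (Fin n)) (hF : IsFace a F) (hG : IsFace a G) (hFG : F ⊆ G)
    (M : Type) [AddCommGroup M] [Module ℂ M]
    (g : GradedSAMod a M) (hfg : g.FGmod) :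
    (∀ Z : Set (CS d), Z ⊆ g.qdegLoc G →
        (IsIrredComp Z (g.qdegLoc G) ↔ IsIrredComp Z (g.qdegLoc F))) ∧
      g.qdegLoc G ⊆ g.qdegLoc F := by
  classical
  have hσ : sigmaF a G ∈ NA a := sigmaF_mem a G
  have hWF : g.qdegLoc F = zClosure (toC '' g.survTdeg F) := qdegLoc_eq g F
  have hWG : g.qdegLoc G = zClosure (toC '' g.survTdeg G) := qdegLoc_eq g G
  have hsubE : g.survTdeg G ⊆ g.survTdeg F := surv_subset g hFG
  have hWsub' : zClosure (toC '' g.survTdeg G) ⊆ zClosure (toC '' g.survTdeg F) :=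
    zClosure_mono (Set.image_mono hsubE)
  have hWsub : g.qdegLoc G ⊆ g.qdegLoc F := by
    rw [hWF, hWG]
    exact hWsub'
  refine ⟨?_, hWsub⟩
  intro Z hZG
  obtain ⟨K, Bs, hcover⟩ := torsion_degrees_cover a g hfg (sigmaF a G) hσ
  set I : Set (Fin n → ℕ) := {e | ∃ u ∈ NA a, phiN a e = K • sigmaF a G + u} with hI
  have hIup : ∀ e ∈ I, ∀ v, e + v ∈ I := by
    rintro e ⟨u, hu, hequ⟩ v
    exact ⟨u + phiN a v, add_mem hu (phiN_mem a v), by rw [map_add, hequ]; abel⟩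
  obtain ⟨B, hcells⟩ := cell_cover I hIup
  set Cand : Finset ((Fin n → ℕ) × Finset (Fin n)) :=
    (Fintype.piFinset fun _ : Fin n => Finset.range (B + 1)) ×ˢ
      (Finset.univ : Finset (Finset (Fin n))) with hCand
  set Good : Finset ((Fin n → ℕ) × Finset (Fin n)) :=
    Cand.filter (fun ws => ∀ e' ∈ cellSet ws.1 ws.2, e' ∉ I) with hGood
  set Pieces : Finset (Lat d × ((Fin n → ℕ) × Finset (Fin n))) := Bs ×ˢ Good with hPieces
  set Aff : Lat d × ((Fin n → ℕ) × Finset (Fin n)) → Set (CS d) :=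
    fun q => {x | x - toC (q.1 + phiN a q.2.1) ∈
      Submodule.span ℂ ((fun i => toC (a i)) '' ↑q.2.2)} with hAff
  have hAffcl : ∀ q, IsZClosed (Aff q) := fun q => isZClosed_affine _ _
  have hAffdir : ∀ q ∈ Pieces,
      toC (sigmaF a G) ∉ Submodule.span ℂ ((fun i => toC (a i)) '' ↑q.2.2) := by
    intro q hq
    rw [hPieces, Finset.mem_product] at hq
    have hg := hq.2
    rw [hGood, Finset.mem_filter] at hg
    apply good_cell_no_direction a hσ K (w := q.2.1) (S := q.2.2)
    intro e' he' hcon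
    exact hg.2 e' he' hcon
  have hUcl : IsZClosed (⋃ q ∈ Pieces, Aff q) :=
    isZClosed_biUnion Pieces Aff (fun q _ => hAffcl q)
  have hkeycover : zClosure (toC '' g.survTdeg F) ⊆
      zClosure (toC '' g.survTdeg G) ∪ ⋃ q ∈ Pieces, Aff q := by
    apply zClosure_min _ (isZClosed_union isZClosed_zClosure hUcl)
    rintro - ⟨γ, hγ, rfl⟩
    rcases surv_split g F G hγ with hmemG | ⟨m, hm, hne, htor⟩
    · exact Or.inl (subset_zClosure _ ⟨γ, hmemG, rfl⟩)
    · right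
      obtain ⟨β, hβ, e, hne', heq⟩ := hcover γ m hm hne htor
      have heI : e ∉ I := hne'
      obtain ⟨w, S, hwB, hecell, hdisj⟩ := hcells e heI
      have hwBox : w ∈ Fintype.piFinset fun _ : Fin n => Finset.range (B + 1) := by
        rw [Fintype.mem_piFinset]
        intro i
        rw [Finset.mem_range]
        exact Nat.lt_succ_of_le (hwB i)
      have hGoodmem : (w, S) ∈ Good := by
        rw [hGood, Finset.mem_filter]
        exact ⟨by rw [hCand, Finset.mem_product]; exact ⟨hwBox, Finset.mem_univ _⟩, hdisj⟩
      have hqmem : (β, (w, S)) ∈ Pieces := by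
        rw [hPieces, Finset.mem_product]; exact ⟨hβ, hGoodmem⟩
      refine Set.mem_biUnion hqmem ?_
      obtain ⟨vv, hvv0, hevv⟩ := hecell
      show toC γ - toC (β + phiN a w) ∈
        Submodule.span ℂ ((fun i => toC (a i)) '' ↑S)
      have hγ2 : γ = (β + phiN a w) + phiN a vv := by
        rw [heq, hevv, map_add]; abel
      have hdiff : toC γ - toC (β + phiN a w) = toC (phiN a vv) := by
        rw [hγ2]
        funext j
        simp only [toC, Pi.sub_apply, Pi.add_apply]
        push_cast
        ring
      rw [hdiff, phiN_apply]
      have hsumC : toC (∑ i, (vv i) • a i) = ∑ i, ((vv i : ℂ)) • toC (a i) := by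
        funext j
        simp only [toC, Finset.sum_apply, Pi.smul_apply, smul_eq_mul, nsmul_eq_mul,
          Pi.mul_apply, Pi.natCast_apply]
        push_cast
        rfl
      rw [hsumC]
      apply Submodule.sum_mem
      intro i _
      by_cases hiS : i ∈ S
      · exact Submodule.smul_mem _ _ (Submodule.subset_span ⟨i, hiS, rfl⟩)
      · rw [hvv0 i hiS]
        simp
  have hWGinv : ∀ x ∈ zClosure (toC '' g.survTdeg G), ∀ z : ℂ,
      x + z • toC (sigmaF a G) ∈ zClosure (toC '' g.survTdeg G) :=
    fun x hx z => zClosure_line_stable (fun γ hγ => surv_shift g G hγ) hx z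
  constructor
  · intro hcomp
    rw [hWG] at hcomp
    have hZinv : ∀ x ∈ Z, ∀ z : ℂ, x + z • toC (sigmaF a G) ∈ Z :=
      comp_line_invariant isZClosed_zClosure hWGinv hcomp
    obtain ⟨hZW, hZcl, hZirr, hZmax⟩ := hcomp
    rw [hWF]
    refine ⟨hZW.trans hWsub', hZcl, hZirr, ?_⟩
    intro Z' hZ'cl hZ'irr hZZ' hZ'W
    have hZ'cover : Z' ⊆ zClosure (toC '' g.survTdeg G) ∪ ⋃ q ∈ Pieces, Aff q :=
      hZ'W.trans hkeycover
    rcases hZ'irr.2 _ _ isZClosed_zClosure hUcl hZ'cover with h | h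
    · exact hZmax Z' hZ'cl hZ'irr hZZ' h
    · exfalso
      obtain ⟨q, hq, hZq⟩ :=
        zirred_subset_finset_biUnion Pieces Aff (fun q _ => hAffcl q) hZ'irr h
      obtain ⟨x, hx⟩ := hZirr.1
      have hx1 : x - toC (q.1 + phiN a q.2.1) ∈
          Submodule.span ℂ ((fun i => toC (a i)) '' ↑q.2.2) := hZq (hZZ' hx)
      have hx2 : (x + (1:ℂ) • toC (sigmaF a G)) - toC (q.1 + phiN a q.2.1) ∈
          Submodule.span ℂ ((fun i => toC (a i)) '' ↑q.2.2) := hZq (hZZ' (hZinv x hx 1))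
      apply hAffdir q hq
      have hceq : toC (sigmaF a G) =
          ((x + (1:ℂ) • toC (sigmaF a G)) - toC (q.1 + phiN a q.2.1)) -
            (x - toC (q.1 + phiN a q.2.1)) := by
        funext j
        simp only [Pi.sub_apply, Pi.add_apply, Pi.smul_apply, smul_eq_mul, one_mul]
        ring
      rw [hceq]
      exact Submodule.sub_mem _ hx2 hx1
  · intro hcomp
    obtain ⟨hZW, hZcl, hZirr, hZmax⟩ := hcomp
    exact ⟨hZG, hZcl, hZirr, fun Z' h1 h2 h3 h4 => hZmax Z' h1 h2 h3 (h4.trans hWsub)⟩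


end

end GKZ
end

section
/- Let F ⪯ A be a face, β ∈ ℂ^d, and α ∈ ℕA. (a) Suppose neither β nor β−α lies in ℰ^strong_{A,F} := ⋃_{i < d_{A/F}} qdeg H^i(℧•_F). If λ ∈ ℂF satisfies β−λ ∈ ℤ^d and H^i(℧•_F)_{β−λ} ≠ 0 for some i, then H^j(℧•_F)_{β−α−λ} ≠ 0 for some j (that is, E*_F(β) ⊆ E*_F(β−α)). (b) If λ ∈ ℂF satisfies β−λ ∈ ℕA−ℕF, then β+α−λ ∈ ℕA−ℕF (that is, E_F(β) ⊆ E_F(β+α)). -/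
/-!
Common setup: `A` is a `d × n` integer matrix, given by its columns `a : Fin n → Lat d`,
with `ℤA = ℤ^d` (`SpansZ`) and `ℕA` pointed (`Pointed`).  Faces, semigroups, graded
modules, quasidegree sets, the dualizing complex `ω•_{S_A}` and the Ishida complexes
`℧•_F` are formalized below; all cohomology statements are expressed via the
(ℤ^d-)graded components of these complexes.
-/

namespace GKZ

open scoped Classical

noncomputable section

variable {d n : ℕ}

/-! ### Auxiliary lemmas -/

section Aux

variable {d n : ℕ}

lemma toC_add (x y : Lat d) : toC (x + y) = toC x + toC y := by
  funext i; simp [toC]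

lemma toC_zero : toC (0 : Lat d) = 0 := by
  funext i; simp [toC]

lemma toC_zsmul (k : ℤ) (x : Lat d) : toC (k • x) = (k : ℂ) • toC x := by
  funext i; simp [toC]

lemma NFace_le_NA (a : Fin n → Lat d) (G : Set (Fin n)) : NFace a G ≤ NA a :=
  AddSubmonoid.closure_mono (by rintro x ⟨i, _, rfl⟩; exact ⟨i, rfl⟩)

lemma NFace_mono (a : Fin n → Lat d) {F G : Set (Fin n)} (h : F ⊆ G) :
    NFace a F ≤ NFace a G :=
  AddSubmonoid.closure_mono (Set.image_mono h)

/-- Every element of the group closure is a difference of monoid-closure elements. -/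
lemma sub_decomp_subgroup {S : Set (Lat d)} {x : Lat d}
    (hx : x ∈ AddSubgroup.closure S) :
    ∃ p ∈ AddSubmonoid.closure S, ∃ q ∈ AddSubmonoid.closure S, x = p - q := by
  induction hx using AddSubgroup.closure_induction with
  | mem x hx => exact ⟨x, AddSubmonoid.subset_closure hx, 0, zero_mem _, by abel⟩
  | zero => exact ⟨0, zero_mem _, 0, zero_mem _, by abel⟩
  | add x y _ _ ihx ihy =>
      obtain ⟨p, hp, q, hq, rfl⟩ := ihx
      obtain ⟨p', hp', q', hq', rfl⟩ := ihy
      exact ⟨p + p', add_mem hp hp', q + q', add_mem hq hq', by abel⟩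
  | neg x _ ihx =>
      obtain ⟨p, hp, q, hq, rfl⟩ := ihx
      exact ⟨q, hq, p, hp, by abel⟩

/-- Every element of the ℤ-span is a difference of monoid-closure elements. -/
lemma sub_decomp_span {S : Set (Lat d)} {x : Lat d}
    (hx : x ∈ Submodule.span ℤ S) :
    ∃ p ∈ AddSubmonoid.closure S, ∃ q ∈ AddSubmonoid.closure S, x = p - q := by
  induction hx using Submodule.span_induction with
  | mem x hx => exact ⟨x, AddSubmonoid.subset_closure hx, 0, zero_mem _, by abel⟩
  | zero => exact ⟨0, zero_mem _, 0, zero_mem _, by abel⟩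
  | add x y _ _ ihx ihy =>
      obtain ⟨p, hp, q, hq, rfl⟩ := ihx
      obtain ⟨p', hp', q', hq', rfl⟩ := ihy
      exact ⟨p + p', add_mem hp hp', q + q', add_mem hq hq', by abel⟩
  | smul z x _ ihx =>
      obtain ⟨p, hp, q, hq, rfl⟩ := ihx
      obtain ⟨m, rfl | rfl⟩ := Int.eq_nat_or_neg z
      · refine ⟨m • p, AddSubmonoid.nsmul_mem _ hp m, m • q, AddSubmonoid.nsmul_mem _ hq m, ?_⟩
        rw [smul_sub, natCast_zsmul, natCast_zsmul]
      · refine ⟨m • q, AddSubmonoid.nsmul_mem _ hq m, m • p, AddSubmonoid.nsmul_mem _ hp m, ?_⟩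
        rw [neg_smul, smul_sub, natCast_zsmul, natCast_zsmul]; abel

lemma dimF_le_d (a : Fin n → Lat d) (G : Set (Fin n)) : dimF a G ≤ d := by
  have h := Submodule.finrank_le (Submodule.span ℤ (a '' G))
  simpa [dimF, Module.finrank_pi] using h

/-- If the face `G` has full rank `d`, every lattice point has a positive multiple
in the ℤ-span of the columns of `G`. -/
lemma exists_nsmul_mem_span (a : Fin n → Lat d) {G : Set (Fin n)} (hG : dimF a G = d)
    (x : Lat d) : ∃ m : ℕ, 0 < m ∧ (m : ℤ) • x ∈ Submodule.span ℤ (a '' G) := by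
  classical
  set P := Submodule.span ℤ (a '' G) with hP
  have hfr : Module.finrank ℤ P = d := hG
  let b := Module.finBasis ℤ ↥P
  set v : Fin (Module.finrank ℤ ↥P) → Lat d := fun i => (b i : Lat d) with hv
  have hvind : LinearIndependent ℤ v :=
    b.linearIndependent.map' P.subtype (Submodule.ker_subtype P)
  set f : Option (Fin (Module.finrank ℤ ↥P)) → Lat d := fun o => o.elim x v with hf
  have hnot : ¬ LinearIndependent ℤ f := by
    intro hind
    have hcard := hind.fintype_card_le_finrank
    have hrk : Module.finrank ℤ (Lat d) = d := by
      simp [Module.finrank_pi]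
    rw [hrk] at hcard
    simp [Fintype.card_option, hfr] at hcard
  obtain ⟨g, hg, i₀, hi₀⟩ := Fintype.not_linearIndependent_iff.mp hnot
  rw [Fintype.sum_option] at hg
  by_cases hc : g none = 0
  · exfalso
    rw [hc, zero_smul, zero_add] at hg
    have : ∀ i, g (some i) = 0 := Fintype.linearIndependent_iff.mp hvind _ hg
    cases i₀ with
    | none => exact hi₀ hc
    | some i => exact hi₀ (this i)
  · refine ⟨(g none).natAbs, Int.natAbs_pos.mpr hc, ?_⟩
    have hmem : g none • x ∈ P := by
      have : g none • (f none) = - ∑ i, g (some i) • f (some i) := by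
        rw [eq_neg_iff_add_eq_zero]; exact hg
      have hx : g none • x = - ∑ i, g (some i) • v i := by simpa [hf] using this
      rw [hx]
      refine neg_mem (Submodule.sum_mem _ fun i _ => Submodule.smul_mem _ _ ?_)
      exact (b i).2
    rcases Int.natAbs_eq (g none) with h | h
    · rw [← h]; exact hmem
    · have h' : ((g none).natAbs : ℤ) = -g none := by omega
      rw [h', neg_smul]; exact neg_mem hmem

/-- Over a spanning `A`, every lattice point is a difference of two elements of ℕA. -/
lemma exists_NA_sub (a : Fin n → Lat d) (hZA : SpansZ a) (γ : Lat d) :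
    ∃ u ∈ NA a, ∃ v ∈ NA a, γ = u - v := by
  have hγ : γ ∈ AddSubgroup.closure (Set.range a) := by
    rw [hZA]; trivial
  exact sub_decomp_subgroup hγ

/-- For a full-dimensional face `G`, the localized degree set is everything. -/
lemma mem_locE_of_dim_eq (a : Fin n → Lat d) (hZA : SpansZ a) {G : Set (Fin n)}
    (hG : dimF a G = d) (γ : Lat d) : γ ∈ locE a (NA a : Set (Lat d)) G := by
  obtain ⟨u, hu, v, hv, rfl⟩ := exists_NA_sub a hZA γ
  obtain ⟨m, hm, hmx⟩ := exists_nsmul_mem_span a hG (-v)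
  obtain ⟨p, hp, q, hq, hpq⟩ := sub_decomp_span hmx
  refine ⟨q, hq, ?_⟩
  obtain ⟨m', rfl⟩ := Nat.exists_eq_succ_of_ne_zero hm.ne'
  have hq' : q = p + ((m' + 1 : ℕ) : ℤ) • v := by
    rw [smul_neg] at hpq
    have h1 : q - p = ((m' + 1 : ℕ) : ℤ) • v := by
      rw [← neg_sub p q, ← hpq, neg_neg]
    rw [← h1]; abel
  have he : u - v + q = u + p + (m' : ℕ) • v := by
    rw [hq']
    push_cast
    rw [add_smul, one_smul]
    rw [natCast_zsmul]
    abel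
  show u - v + q ∈ NA a
  rw [he]
  exact add_mem (add_mem hu (NFace_le_NA a G hp)) (AddSubmonoid.nsmul_mem _ hv m')

lemma mem_funSupported {ι : Type*} {S : Set ι} {c : ι → ℂ} :
    c ∈ funSupported S ↔ ∀ i ∉ S, c i = 0 := Iff.rfl

lemma locE_add_mem (a : Fin n → Lat d) {G : Set (Fin n)} {γ p q : Lat d}
    (hp : p ∈ NFace a G) (hq : q ∈ NFace a G)
    (hγ : γ ∈ locE a (NA a : Set (Lat d)) G) :
    γ + (p - q) ∈ locE a (NA a : Set (Lat d)) G := by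
  obtain ⟨f, hf, hγf⟩ := hγ
  refine ⟨f + q, add_mem hf hq, ?_⟩
  have he : γ + (p - q) + (f + q) = (γ + f) + p := by abel
  rw [he]
  exact add_mem hγf (NFace_le_NA a G hp)

lemma locE_of_sub_mem (a : Fin n → Lat d) {α : Lat d} (hα : α ∈ NA a)
    {G : Set (Fin n)} {γ : Lat d}
    (h : γ - α ∈ locE a (NA a : Set (Lat d)) G) :
    γ ∈ locE a (NA a : Set (Lat d)) G := by
  obtain ⟨f, hf, h2⟩ := h
  refine ⟨f, hf, ?_⟩
  have he : γ + f = (γ - α + f) + α := by abel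
  rw [he]
  exact add_mem h2 hα

lemma ishChain_congr (a : Fin n → Lat d) (E : Set (Lat d)) (F : Set (Fin n)) (j : ℤ)
    {γ γ' : Lat d}
    (h : ∀ G : FaceT a, F ⊆ G.1 → (dimF a G.1 : ℤ) = j →
      (γ ∈ locE a E G.1 ↔ γ' ∈ locE a E G.1)) :
    ishChain a E F j γ = ishChain a E F j γ' := by
  unfold ishChain
  congr 1
  ext G
  simp only [Set.mem_setOf_eq]
  constructor
  · rintro ⟨h1, h2, h3⟩; exact ⟨h1, h2, (h G h1 h2).mp h3⟩
  · rintro ⟨h1, h2, h3⟩; exact ⟨h1, h2, (h G h1 h2).mpr h3⟩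

lemma ishChain_shift (a : Fin n → Lat d) (F : Set (Fin n)) (j : ℤ) (γ w : Lat d)
    (hw : w ∈ ZFace a F) :
    ishChain a (NA a : Set (Lat d)) F j (γ + w) = ishChain a (NA a : Set (Lat d)) F j γ := by
  obtain ⟨p, hp, q, hq, rfl⟩ := sub_decomp_subgroup hw
  apply ishChain_congr
  intro G hFG _
  have hp' : p ∈ NFace a G.1 := NFace_mono a hFG hp
  have hq' : q ∈ NFace a G.1 := NFace_mono a hFG hq
  constructor
  · intro h
    have := locE_add_mem a hq' hp' h
    have he : γ + (p - q) + (q - p) = γ := by abel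
    rwa [he] at this
  · intro h
    exact locE_add_mem a hp' hq' h

lemma ishHne_shift (a : Fin n → Lat d) (ε : Set (Fin n) → Set (Fin n) → ℂ)
    (F : Set (Fin n)) (j : ℤ) (γ w : Lat d) (hw : w ∈ ZFace a F) :
    ishHne a (NA a : Set (Lat d)) ε F j (γ + w) ↔
    ishHne a (NA a : Set (Lat d)) ε F j γ := by
  unfold ishHne ishZ ishB
  rw [ishChain_shift a F j γ w hw, ishChain_shift a F (j - 1) γ w hw]

lemma ishChain_sub_le (a : Fin n → Lat d) {α : Lat d} (hα : α ∈ NA a)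
    (F : Set (Fin n)) (j : ℤ) (γ : Lat d) :
    ishChain a (NA a : Set (Lat d)) F j (γ - α) ≤
    ishChain a (NA a : Set (Lat d)) F j γ := by
  intro c hc
  unfold ishChain at hc ⊢
  rw [mem_funSupported] at hc ⊢
  intro G hG
  apply hc
  rintro ⟨h1, h2, h3⟩
  exact hG ⟨h1, h2, locE_of_sub_mem a hα h3⟩

lemma ishChain_top_eq (a : Fin n → Lat d) (hZA : SpansZ a) (F : Set (Fin n))
    (γ γ' : Lat d) :
    ishChain a (NA a : Set (Lat d)) F (d : ℤ) γ =
    ishChain a (NA a : Set (Lat d)) F (d : ℤ) γ' := by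
  apply ishChain_congr
  intro G _ hdim
  have hG : dimF a G.1 = d := by exact_mod_cast hdim
  simp [mem_locE_of_dim_eq a hZA hG]

lemma top_stable (a : Fin n → Lat d) (hZA : SpansZ a) {α : Lat d} (hα : α ∈ NA a)
    (ε : Set (Fin n) → Set (Fin n) → ℂ) (F : Set (Fin n)) (γ : Lat d)
    (h : ishHne a (NA a : Set (Lat d)) ε F (d : ℤ) γ) :
    ishHne a (NA a : Set (Lat d)) ε F (d : ℤ) (γ - α) := by
  intro hle
  apply h
  intro z hz
  obtain ⟨hz1, hz2⟩ := Submodule.mem_inf.mp hz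
  have hz' : z ∈ ishZ a (NA a : Set (Lat d)) ε F (d : ℤ) (γ - α) := by
    refine Submodule.mem_inf.mpr ⟨?_, hz2⟩
    rwa [ishChain_top_eq a hZA F (γ - α) γ]
  have hb := hle hz'
  exact Submodule.map_mono (ishChain_sub_le a hα F _ γ) hb

/-- A polynomial vanishing on integer points of a line vanishes on the whole line. -/
lemma eval_zero_of_int_line (p : MvPolynomial (Fin d) ℂ) (X u : CS d)
    (h : ∀ k : ℤ, MvPolynomial.eval (X + (k : ℂ) • u) p = 0) (t : ℂ) :
    MvPolynomial.eval (X + t • u) p = 0 := by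
  set q : Polynomial ℂ := MvPolynomial.eval₂ Polynomial.C
    (fun i => Polynomial.C (X i) + Polynomial.C (u i) * Polynomial.X) p with hq
  have key : ∀ s : ℂ, q.eval s = MvPolynomial.eval (X + s • u) p := by
    intro s
    have hcomp := MvPolynomial.eval₂_comp_left (Polynomial.evalRingHom s) Polynomial.C
      (fun i => Polynomial.C (X i) + Polynomial.C (u i) * Polynomial.X) p
    have hl : q.eval s = (Polynomial.evalRingHom s) (MvPolynomial.eval₂ Polynomial.C
        (fun i => Polynomial.C (X i) + Polynomial.C (u i) * Polynomial.X) p) := rfl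
    rw [hl, hcomp]
    have h1 : (Polynomial.evalRingHom s).comp Polynomial.C = RingHom.id ℂ := by
      ext x; simp
    have h2 : (⇑(Polynomial.evalRingHom s) ∘ fun i =>
        Polynomial.C (X i) + Polynomial.C (u i) * Polynomial.X) = fun i => X i + u i * s := by
      funext i; simp
    rw [h1, h2]
    have h3 : (fun i => X i + u i * s) = X + s • u := by
      funext i; simp [Pi.add_apply, Pi.smul_apply]; ring
    rw [h3]
    rfl
  have hq0 : q = 0 := by
    apply Polynomial.eq_zero_of_infinite_isRoot
    apply Set.infinite_of_injective_forall_mem (f := fun k : ℤ => (k : ℂ))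
      Int.cast_injective
    intro k
    simp only [Set.mem_setOf_eq, Polynomial.IsRoot]
    rw [key]
    exact h k
  rw [← key t, hq0]
  simp

/-- Density lemma: a set of lattice degrees invariant under translation by ℤF has its
Zariski closure invariant under translation by ℂF. -/
lemma mem_zClosure_shift (a : Fin n → Lat d) (F : Set (Fin n)) (γ : Lat d)
    (S : Set (Lat d)) (hS : ∀ w ∈ ZFace a F, γ + w ∈ S)
    {lam : CS d} (hlam : lam ∈ CFace a F) :
    toC γ + lam ∈ zClosure (toC '' S) := by
  intro p hp
  have base : ∀ x : CS d,
      (∀ w ∈ ZFace a F, MvPolynomial.eval (toC γ + x + toC w) p = 0) →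
      ∀ (t : ℂ) (j : Fin n), j ∈ F →
      ∀ w ∈ ZFace a F,
        MvPolynomial.eval (toC γ + (x + t • toC (a j)) + toC w) p = 0 := by
    intro x hx t j hj w hw
    have hline : ∀ k : ℤ,
        MvPolynomial.eval ((toC γ + x + toC w) + (k : ℂ) • toC (a j)) p = 0 := by
      intro k
      have hgen : a j ∈ ZFace a F :=
        AddSubgroup.subset_closure (Set.mem_image_of_mem a hj)
      have hw' : w + k • (a j) ∈ ZFace a F :=
        AddSubgroup.add_mem _ hw (AddSubgroup.zsmul_mem _ hgen k)
      have hv := hx _ hw'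
      have he : toC γ + x + toC (w + k • a j) =
          (toC γ + x + toC w) + (k : ℂ) • toC (a j) := by
        rw [toC_add, toC_zsmul]; abel
      rwa [he] at hv
    have hres := eval_zero_of_int_line p (toC γ + x + toC w) (toC (a j)) hline t
    have he : toC γ + x + toC w + t • toC (a j) =
        toC γ + (x + t • toC (a j)) + toC w := by abel
    rwa [he] at hres
  obtain ⟨m, c, v, hsum⟩ := Submodule.mem_span_set'.mp hlam
  have main : ∀ (m : ℕ) (c : Fin m → ℂ) (v : Fin m → ↥(toC '' (a '' F))),
      ∀ w ∈ ZFace a F,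
        MvPolynomial.eval (toC γ + (∑ i, c i • (v i : CS d)) + toC w) p = 0 := by
    intro m
    induction m with
    | zero =>
        intro c v w hw
        have h0 := hp _ ⟨γ + w, hS w hw, rfl⟩
        rw [toC_add] at h0
        simpa using h0
    | succ m ih =>
        intro c v w hw
        rw [Fin.sum_univ_castSucc]
        have hvm : ((v (Fin.last m) : CS d)) ∈ toC '' (a '' F) := (v (Fin.last m)).2
        rw [Set.mem_image] at hvm
        obtain ⟨z, hz, hzc⟩ := hvm
        rw [Set.mem_image] at hz
        obtain ⟨j, hj, rfl⟩ := hz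
        have hx := ih (fun i => c i.castSucc) (fun i => v i.castSucc)
        have hres := base _ hx (c (Fin.last m)) j hj w hw
        rw [← hzc]
        exact hres
  have hfin := main m c v 0 (AddSubgroup.zero_mem _)
  rw [hsum, toC_zero] at hfin
  simpa using hfin

end Aux

/-- Let `F ⪯ A`, `β ∈ ℂ^d`, `α ∈ ℕA`.
(a) If neither `β` nor `β − α` lies in ℰ^strong_{A,F} = ⋃_{i<d_{A/F}} qdeg H^i(℧•_F) and
`λ ∈ ℂF` satisfies `β − λ ∈ ℤ^d` and `H^i(℧•_F)_{β−λ} ≠ 0` for some `i`, then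
`H^j(℧•_F)_{β−α−λ} ≠ 0` for some `j`  (E*_F(β) ⊆ E*_F(β−α)).
(b) If `λ ∈ ℂF` satisfies `β − λ ∈ ℕA − ℕF`, then `β + α − λ ∈ ℕA − ℕF`
(E_F(β) ⊆ E_F(β+α)). -/
theorem EFstar_and_EF_stability
    {d n : ℕ} (hd : 0 < d) (hn : 0 < n) (a : Fin n → Lat d)
    (hZA : SpansZ a) (hPt : Pointed a)
    (F : Set (Fin n)) (hF : IsFace a F)
    (β : CS d) (α : Lat d) (hα : α ∈ NA a)
    (ε : Set (Fin n) → Set (Fin n) → ℂ)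
    (hval : ∀ G' G'' : FaceT a, G'.1 ⊆ G''.1 → dimF a G''.1 = dimF a G'.1 + 1 →
      ε G'.1 G''.1 = 1 ∨ ε G'.1 G''.1 = -1)
    (hsq : ∀ (γ : Lat d) (j : ℤ) (c : FaceT a → ℂ),
      c ∈ ishChain a (NA a : Set (Lat d)) F j γ → ishDelta a ε (ishDelta a ε c) = 0) :
    ((β ∉ ⋃ (i : ℕ) (_ : dimF a F + i < d), zClosure (toC '' {γ : Lat d |
        ishHne a (NA a : Set (Lat d)) ε F ((dimF a F : ℤ) + (i : ℤ)) γ})) →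
      (β - toC α ∉ ⋃ (i : ℕ) (_ : dimF a F + i < d), zClosure (toC '' {γ : Lat d |
        ishHne a (NA a : Set (Lat d)) ε F ((dimF a F : ℤ) + (i : ℤ)) γ})) →
      ∀ lam ∈ CFace a F, ∀ γ : Lat d, toC γ = β - lam →
        (∃ i : ℕ, ishHne a (NA a : Set (Lat d)) ε F ((dimF a F : ℤ) + (i : ℤ)) γ) →
        ∃ j : ℕ, ishHne a (NA a : Set (Lat d)) ε F ((dimF a F : ℤ) + (j : ℤ)) (γ - α)) ∧
    (∀ lam ∈ CFace a F, (∃ γ ∈ NAmNF a F, toC γ = β - lam) →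
      ∃ γ' ∈ NAmNF a F, toC γ' = β + toC α - lam) := by
  constructor
  · intro hβ hβα lam hlam γ hγ hex
    obtain ⟨i, hi⟩ := hex
    have hβeq : β = toC γ + lam := by rw [hγ]; ring
    rcases lt_trichotomy (dimF a F + i) d with hlt | heq | hgt
    · exfalso
      apply hβ
      refine Set.mem_iUnion.mpr ⟨i, Set.mem_iUnion.mpr ⟨hlt, ?_⟩⟩
      rw [hβeq]
      refine mem_zClosure_shift a F γ _ ?_ hlam
      intro w hw
      exact (ishHne_shift a ε F _ γ w hw).mpr hi
    · refine ⟨i, ?_⟩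
      have hcast : ((dimF a F : ℤ) + (i : ℤ)) = (d : ℤ) := by exact_mod_cast heq
      rw [hcast] at hi ⊢
      exact top_stable a hZA hα ε F γ hi
    · exfalso
      apply hi
      intro z hz
      obtain ⟨hz1, _⟩ := Submodule.mem_inf.mp hz
      have hz0 : z = 0 := by
        funext G
        apply hz1 G
        rintro ⟨_, h2, _⟩
        have hle := dimF_le_d a G.1
        omega
      rw [hz0]
      exact zero_mem _
  · rintro lam _ ⟨γ, ⟨u, hu, v, hv, huv⟩, hγ⟩
    refine ⟨γ + α, ⟨u + α, add_mem hu hα, v, hv, by rw [huv]; abel⟩, ?_⟩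
    rw [toC_add, hγ]
    ring

end

end GKZ
end
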